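/- arXiv:2003.02165 — 8 statements merged into one kernel-verified Lean document; each statement's English description precedes it below -/
import Mathlib

section
/- Let d ≥ 2 and g : [-1,1] → (-∞,∞] be continuous on [-1,1), differentiable on (-1,1) with g' convex on (-1,1), and lim_{t→1⁻} g(t) = g(1). If t_0, t_1, ..., t_d ∈ [-1,1] satisfy ∑ t_i = 0 and ∑ t_i² = (d+1)/d, then g(-1) + d·g(1/d) ≤ ∑_{i=0}^d g(t_i). -/
open Set

lemma convHelper {f : ℝ → ℝ} {s : Set ℝ} (hf : ConvexOn ℝ s f) {x y z : ℝ}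
    (hx : x ∈ s) (hy : y ∈ s) (hxz : x < z) (hzy : z < y) :
    (y - x) * f z ≤ (y - z) * f x + (z - x) * f y := by
  have hxy : x < y := hxz.trans hzy
  have hyx : (0:ℝ) < y - x := by linarith
  have ha : (0:ℝ) ≤ (y - z)/(y - x) := div_nonneg (by linarith) hyx.le
  have hb : (0:ℝ) ≤ (z - x)/(y - x) := div_nonneg (by linarith) hyx.le
  have hab : (y - z)/(y - x) + (z - x)/(y - x) = 1 := by field_simp; ring
  have := hf.2 hx hy ha hb hab
  rw [smul_eq_mul, smul_eq_mul, smul_eq_mul, smul_eq_mul] at this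
  have hz : (y - z)/(y - x) * x + (z - x)/(y - x) * y = z := by field_simp; ring
  rw [hz] at this
  have := mul_le_mul_of_nonneg_left this hyx.le
  calc (y - x) * f z ≤ (y - x) * ((y - z)/(y - x) * f x + (z - x)/(y - x) * f y) := this
    _ = (y - z) * f x + (z - x) * f y := by field_simp

lemma sumq_aux (d : ℕ) (hd : 2 ≤ d) (A B C : ℝ) (t : Fin (d+1) → ℝ)
    (hsum : ∑ i, t i = 0) (hsq : ∑ i, (t i)^2 = ((d:ℝ)+1)/(d:ℝ)) :
    ∑ i, (A + B*(t i - 1/(d:ℝ)) + C*(t i - 1/(d:ℝ))^2)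
      = (A + B*(-1 - 1/(d:ℝ)) + C*(-1 - 1/(d:ℝ))^2)
        + (d:ℝ) * (A + B*(1/(d:ℝ) - 1/(d:ℝ)) + C*(1/(d:ℝ) - 1/(d:ℝ))^2) := by
  have hd0 : (0:ℝ) < (d:ℝ) := by
    have : (2:ℝ) ≤ (d:ℝ) := by exact_mod_cast hd
    linarith
  have hdne : (d:ℝ) ≠ 0 := ne_of_gt hd0
  set m : ℝ := 1/(d:ℝ) with hm
  have e : ∀ i : Fin (d+1), A + B*(t i - m) + C*(t i - m)^2
      = (A - B*m + C*m^2) + (B - 2*C*m) * t i + C * (t i)^2 := by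
    intro i; ring
  rw [Finset.sum_congr rfl (fun i _ => e i), Finset.sum_add_distrib, Finset.sum_add_distrib,
    Finset.sum_const, ← Finset.mul_sum, ← Finset.mul_sum, hsum, hsq]
  simp only [Finset.card_univ, Fintype.card_fin, nsmul_eq_mul, mul_zero, add_zero]
  push_cast
  rw [hm]
  field_simp
  ring

theorem stmt_1 (d : ℕ) (hd : 2 ≤ d) (g : ℝ → EReal) (g' : ℝ → ℝ)
    (hne_bot : ∀ t ∈ Set.Icc (-1:ℝ) 1, g t ≠ ⊥)
    (hfin : ∀ t ∈ Set.Ico (-1:ℝ) 1, g t ≠ ⊤)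
    (hcont : ContinuousOn g (Set.Ico (-1:ℝ) 1))
    (hlim : Filter.Tendsto g (nhdsWithin 1 (Set.Iio 1)) (nhds (g 1)))
    (hderiv : ∀ t ∈ Set.Ioo (-1:ℝ) 1, HasDerivAt (fun s => (g s).toReal) (g' t) t)
    (hconv : ConvexOn ℝ (Set.Ioo (-1:ℝ) 1) g')
    (t : Fin (d+1) → ℝ) (ht : ∀ i, t i ∈ Set.Icc (-1:ℝ) 1)
    (hsum : ∑ i, t i = 0) (hsq : ∑ i, (t i)^2 = ((d:ℝ)+1)/(d:ℝ)) :
    g (-1) + ((d:ℝ) : EReal) * g (1/(d:ℝ)) ≤ ∑ i, g (t i) := by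
  have hd2 : (2:ℝ) ≤ (d:ℝ) := by exact_mod_cast hd
  have hd0 : (0:ℝ) < (d:ℝ) := by linarith
  set m : ℝ := 1/(d:ℝ) with hm_def
  have hm0 : 0 < m := by positivity
  have hm1 : m < 1 := by rw [hm_def]; rw [div_lt_one hd0]; linarith
  have hmneg : (-1:ℝ) < m := by linarith
  have hmIoo : m ∈ Ioo (-1:ℝ) 1 := ⟨hmneg, hm1⟩
  have hmIco : m ∈ Ico (-1:ℝ) 1 := ⟨hmneg.le, hm1⟩
  set φ : ℝ → ℝ := fun s => (g s).toReal with hφ_def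
  -- continuity of φ on Ico
  have hφcont : ContinuousOn φ (Ico (-1:ℝ) 1) := by
    intro s hs
    exact (EReal.tendsto_toReal (hfin s hs) (hne_bot s ⟨hs.1, hs.2.le⟩)).comp (hcont s hs)
  set A : ℝ := φ m with hA_def
  set B : ℝ := g' m with hB_def
  set C : ℝ := (φ (-1) - A + B*(1+m)) / (1+m)^2 with hC_def
  set q : ℝ → ℝ := fun s => A + B*(s-m) + C*(s-m)^2 with hq_def
  set ψ : ℝ → ℝ := fun s => g' s - (B + 2*C*(s-m)) with hψ_def
  have hqcont : Continuous q := by rw [hq_def]; fun_prop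
  have h1m : (0:ℝ) < 1 + m := by linarith
  have hqm : q m = A := by simp [hq_def]
  have hqneg : q (-1) = φ (-1) := by
    rw [hq_def, hC_def]; field_simp; ring
  have hq_deriv : ∀ s : ℝ, HasDerivAt q (B + 2*C*(s-m)) s := by
    intro s
    have h1 : HasDerivAt (fun x : ℝ => x - m) 1 s := (hasDerivAt_id s).sub_const m
    have h2 : HasDerivAt (fun x : ℝ => B*(x-m)) B s := by simpa using h1.const_mul B
    have h3 : HasDerivAt (fun x : ℝ => (x-m)^2) (2*(s-m)) s := by
      exact (h1.pow 2).congr_deriv (by norm_num)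
    have h4 : HasDerivAt (fun x : ℝ => C*(x-m)^2) (C*(2*(s-m))) s := h3.const_mul C
    have := ((h2.const_add A).add h4)
    exact this.congr_deriv (by ring)
  have hh_deriv : ∀ s ∈ Ioo (-1:ℝ) 1, HasDerivAt (fun x => φ x - q x) (ψ s) s :=
    fun s hs => (hderiv s hs).sub (hq_deriv s)
  have hhcont : ContinuousOn (fun x => φ x - q x) (Ico (-1:ℝ) 1) :=
    hφcont.sub hqcont.continuousOn
  have hψm : ψ m = 0 := by simp [hψ_def, hB_def]
  have hψconv : ConvexOn ℝ (Ioo (-1:ℝ) 1) ψ := by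
    refine hconv.sub ⟨convex_Ioo _ _, ?_⟩
    intro x _ y _ a b ha hb hab
    apply le_of_eq
    simp only [smul_eq_mul]
    linear_combination (B - 2*C*m) * hab
  -- MVT wrapper
  have mvt : ∀ a b : ℝ, -1 ≤ a → b < 1 → a < b →
      ∃ c ∈ Ioo a b, ψ c = ((φ b - q b) - (φ a - q a))/(b - a) := by
    intro a b ha hb hab
    have hsub : Icc a b ⊆ Ico (-1:ℝ) 1 := fun x hx => ⟨le_trans ha hx.1, lt_of_le_of_lt hx.2 hb⟩
    have hsub2 : Ioo a b ⊆ Ioo (-1:ℝ) 1 := fun x hx => ⟨lt_of_le_of_lt ha hx.1, hx.2.trans hb⟩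
    exact exists_hasDerivAt_eq_slope (fun x => φ x - q x) ψ hab (hhcont.mono hsub)
      (fun x hx => hh_deriv x (hsub2 hx))
  have hneg0 : φ (-1) - q (-1) = 0 := by rw [hqneg]; ring
  have hm0' : φ m - q m = 0 := by rw [hqm, hA_def]; ring
  -- Step 1: exists x in (-1,m) with ψ x = 0
  obtain ⟨x, hxmem, hxval⟩ := mvt (-1) m le_rfl hm1 hmneg
  have hψx : ψ x = 0 := by rw [hxval, hneg0, hm0']; ring
  have hxIoo : x ∈ Ioo (-1:ℝ) 1 := ⟨hxmem.1, hxmem.2.trans hm1⟩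
  -- Step 2: ψ ≥ 0 on [m,1)
  have hψpos : ∀ s ∈ Ico m 1, 0 ≤ ψ s := by
    intro s hs
    rcases eq_or_lt_of_le hs.1 with h | h
    · rw [← h, hψm]
    by_contra hneg
    push_neg at hneg
    have hsIoo : s ∈ Ioo (-1:ℝ) 1 := ⟨lt_trans hmneg h, hs.2⟩
    have := convHelper hψconv hxIoo hsIoo hxmem.2 h
    rw [hψx, hψm] at this
    nlinarith [hxmem.2, h, hneg]
  -- Step 3: φ - q ≥ 0 on [m,1)
  have hright : ∀ s ∈ Ico m 1, q s ≤ φ s := by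
    intro s hs
    rcases eq_or_lt_of_le hs.1 with h | h
    · rw [← h]; linarith [hm0']
    obtain ⟨c, hcmem, hcval⟩ := mvt m s hmneg.le hs.2 h
    have hc : 0 ≤ ψ c := hψpos c ⟨hcmem.1.le, hcmem.2.trans hs.2⟩
    rw [hcval, hm0'] at hc
    have hsm : 0 < s - m := by linarith
    have := (le_div_iff₀ hsm).mp hc
    linarith
  -- Step 4: φ - q ≥ 0 on [-1,m]
  have hleft : ∀ s ∈ Icc (-1:ℝ) m, q s ≤ φ s := by
    intro s hs
    rcases eq_or_lt_of_le hs.1 with h | h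
    · rw [← h]; linarith [hneg0]
    rcases eq_or_lt_of_le hs.2 with h2 | h2
    · rw [h2]; linarith [hm0']
    by_contra hneg
    push_neg at hneg
    obtain ⟨x1, hx1mem, hx1val⟩ := mvt (-1) s le_rfl (h2.trans hm1) h
    obtain ⟨x2, hx2mem, hx2val⟩ := mvt s m h.le hm1 h2
    have hx1neg : ψ x1 < 0 := by
      rw [hx1val, hneg0]
      apply div_neg_of_neg_of_pos (by linarith) (by linarith)
    have hx2pos : 0 < ψ x2 := by
      rw [hx2val, hm0']
      apply div_pos (by linarith) (by linarith)
    have hx1Ioo : x1 ∈ Ioo (-1:ℝ) 1 := ⟨hx1mem.1, by linarith [hx1mem.2, h2, hm1]⟩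
    have := convHelper hψconv hx1Ioo hmIoo (hx1mem.2.trans hx2mem.1) hx2mem.2
    rw [hψm] at this
    nlinarith [hx1mem.2, hx2mem.1, hx2mem.2]
  -- Key: q ≤ φ on [-1,1)
  have hkey : ∀ s ∈ Ico (-1:ℝ) 1, q s ≤ φ s := by
    intro s hs
    rcases le_or_gt s m with h | h
    · exact hleft s ⟨hs.1, h⟩
    · exact hright s ⟨h.le, hs.2⟩
  -- EReal inequality for each point of [-1,1]
  have hcoe : ∀ s ∈ Ico (-1:ℝ) 1, g s = ((φ s : ℝ) : EReal) :=
    fun s hs => (EReal.coe_toReal (hfin s hs) (hne_bot s ⟨hs.1, hs.2.le⟩)).symm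
  have hge : ∀ s ∈ Icc (-1:ℝ) 1, ((q s : ℝ) : EReal) ≤ g s := by
    intro s hs
    rcases lt_or_eq_of_le hs.2 with h | h
    · rw [hcoe s ⟨hs.1, h⟩]
      exact_mod_cast hkey s ⟨hs.1, h⟩
    · subst h
      have htend : Filter.Tendsto (fun x => ((q x : ℝ) : EReal)) (nhdsWithin 1 (Iio 1))
          (nhds ((q 1 : ℝ) : EReal)) :=
        ((continuous_coe_real_ereal.comp hqcont).tendsto 1).mono_left nhdsWithin_le_nhds
      refine le_of_tendsto_of_tendsto htend hlim ?_
      filter_upwards [Ioo_mem_nhdsLT_of_mem (⟨hmneg.trans hm1, le_refl (1:ℝ)⟩ : (1:ℝ) ∈ Ioc (-1:ℝ) 1)] with x hx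
      rw [hcoe x ⟨hx.1.le, hx.2⟩]
      exact_mod_cast hkey x ⟨hx.1.le, hx.2⟩
  -- sum of q over the points
  have hsumq : ∑ i, q (t i) = q (-1) + (d:ℝ) * q m := by
    simp only [hq_def, hm_def]
    exact sumq_aux d hd A B C t hsum hsq
  -- final assembly
  have hgneg : g (-1) = ((q (-1) : ℝ) : EReal) := by
    rw [hcoe (-1) ⟨le_refl _, by norm_num⟩, hqneg]
  have hgm : g m = ((q m : ℝ) : EReal) := by
    rw [hcoe m hmIco, hqm, hA_def]
  calc g (-1) + ((d:ℝ) : EReal) * g (1/(d:ℝ))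
      = ((q (-1) + (d:ℝ) * q m : ℝ) : EReal) := by
        rw [← hm_def, hgneg, hgm, ← EReal.coe_mul, ← EReal.coe_add]
    _ = ((∑ i, q (t i) : ℝ) : EReal) := by rw [hsumq]
    _ = ∑ i, ((q (t i) : ℝ) : EReal) :=
        map_sum (⟨⟨Real.toEReal, EReal.coe_zero⟩, EReal.coe_add⟩ : ℝ →+ EReal) _ _
    _ ≤ ∑ i, g (t i) := Finset.sum_le_sum (fun i _ => hge (t i) (ht i))
end

section
/- Let d ≥ 2 and g : [-1,1] → ℝ be continuous on [-1,1], differentiable on (-1,1) with g' convex on (-1,1). If t_0, t_1, ..., t_d ∈ [-1,1] satisfy ∑ t_i = 0 and ∑ t_i² = (d+1)/d, then ∑_{i=0}^d g(t_i) ≤ g(1) + d·g(-1/d). -/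
open Set

/-- A convex function vanishing at two points is nonpositive between them. -/
private lemma cvx_nonpos_between {f : ℝ → ℝ} {s : Set ℝ} (hf : ConvexOn ℝ s f)
    {u v x : ℝ} (hu : u ∈ s) (hv : v ∈ s) (h0u : f u = 0) (h0v : f v = 0)
    (hx : x ∈ Icc u v) : f x ≤ 0 := by
  rcases eq_or_lt_of_le hx.1 with h | h
  · simp [← h, h0u]
  rcases eq_or_lt_of_le hx.2 with h' | h'
  · simp [h', h0v]
  have huv : u < v := lt_trans h h'
  have hvu : v - u ≠ 0 := by linarith
  have hw1 : (0:ℝ) ≤ (v - x) / (v - u) := by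
    apply div_nonneg <;> linarith [hx.2]
  have hw2 : (0:ℝ) ≤ (x - u) / (v - u) := by
    apply div_nonneg <;> linarith [hx.1]
  have hws : (v - x) / (v - u) + (x - u) / (v - u) = 1 := by
    field_simp
    ring
  have := hf.2 hu hv hw1 hw2 hws
  have hx' : ((v - x) / (v - u)) • u + ((x - u) / (v - u)) • v = x := by
    simp only [smul_eq_mul]
    field_simp
    ring
  rw [hx'] at this
  simp only [smul_eq_mul, h0u, h0v] at this
  linarith

/-- A convex function vanishing at two points is nonnegative left of the smaller. -/
private lemma cvx_nonneg_left {f : ℝ → ℝ} {s : Set ℝ} (hf : ConvexOn ℝ s f)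
    {u v x : ℝ} (hx : x ∈ s) (hv : v ∈ s) (h0u : f u = 0) (h0v : f v = 0)
    (hxu : x < u) (huv : u < v) : 0 ≤ f x := by
  have hw1 : (0:ℝ) ≤ (v - u) / (v - x) := by
    apply div_nonneg <;> linarith
  have hw2 : (0:ℝ) ≤ (u - x) / (v - x) := by
    apply div_nonneg <;> linarith
  have hws : (v - u) / (v - x) + (u - x) / (v - x) = 1 := by
    have : v - x ≠ 0 := by linarith
    field_simp
    ring
  have key := hf.2 hx hv hw1 hw2 hws
  have hu' : ((v - u) / (v - x)) • x + ((u - x) / (v - x)) • v = u := by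
    have : v - x ≠ 0 := by linarith
    rw [smul_eq_mul, smul_eq_mul, div_mul_eq_mul_div, div_mul_eq_mul_div, ← add_div,
      div_eq_iff this]
    ring
  rw [hu', h0u] at key
  simp only [smul_eq_mul, h0v, mul_zero, add_zero] at key
  have h1 : 0 < (v - u) / (v - x) := by
    apply div_pos <;> linarith
  nlinarith

/-- A convex function vanishing at two points is nonnegative right of the larger. -/
private lemma cvx_nonneg_right {f : ℝ → ℝ} {s : Set ℝ} (hf : ConvexOn ℝ s f)
    {u v x : ℝ} (hu : u ∈ s) (hx : x ∈ s) (h0u : f u = 0) (h0v : f v = 0)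
    (huv : u < v) (hvx : v < x) : 0 ≤ f x := by
  have hw1 : (0:ℝ) ≤ (x - v) / (x - u) := by
    apply div_nonneg <;> linarith
  have hw2 : (0:ℝ) ≤ (v - u) / (x - u) := by
    apply div_nonneg <;> linarith
  have hws : (x - v) / (x - u) + (v - u) / (x - u) = 1 := by
    have : x - u ≠ 0 := by linarith
    field_simp
    ring
  have key := hf.2 hu hx hw1 hw2 hws
  have hv' : ((x - v) / (x - u)) • u + ((v - u) / (x - u)) • x = v := by
    have : x - u ≠ 0 := by linarith
    rw [smul_eq_mul, smul_eq_mul, div_mul_eq_mul_div, div_mul_eq_mul_div, ← add_div,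
      div_eq_iff this]
    ring
  rw [hv', h0v] at key
  simp only [smul_eq_mul, h0u, mul_zero, zero_add] at key
  have h1 : 0 < (v - u) / (x - u) := by
    apply div_pos <;> linarith
  nlinarith

theorem stmt_2 (d : ℕ) (hd : 2 ≤ d) (g : ℝ → ℝ) (g' : ℝ → ℝ)
    (hcont : ContinuousOn g (Set.Icc (-1:ℝ) 1))
    (hderiv : ∀ t ∈ Set.Ioo (-1:ℝ) 1, HasDerivAt g (g' t) t)
    (hconv : ConvexOn ℝ (Set.Ioo (-1:ℝ) 1) g')
    (t : Fin (d+1) → ℝ) (ht : ∀ i, t i ∈ Set.Icc (-1:ℝ) 1)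
    (hsum : ∑ i, t i = 0) (hsq : ∑ i, (t i)^2 = ((d:ℝ)+1)/(d:ℝ)) :
    ∑ i, g (t i) ≤ g 1 + (d:ℝ) * g (-1/(d:ℝ)) := by
  have hd2 : (2:ℝ) ≤ (d:ℝ) := by exact_mod_cast hd
  have hd0 : (d:ℝ) ≠ 0 := by linarith
  set a : ℝ := -1/(d:ℝ) with ha_def
  have ha1 : -1 < a := by
    rw [ha_def]
    rw [neg_lt, neg_div, neg_neg]
    rw [div_lt_one (by linarith)]
    linarith
  have ha2 : a < 1 := by
    rw [ha_def]
    have : -1/(d:ℝ) < 0 := by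
      apply div_neg_of_neg_of_pos <;> linarith
    linarith
  have ha10 : (1:ℝ) - a ≠ 0 := by linarith
  have haIoo : a ∈ Ioo (-1:ℝ) 1 := ⟨ha1, ha2⟩
  set C : ℝ := (g 1 - g a - g' a * (1 - a)) / (1 - a)^2 with hC_def
  set p : ℝ → ℝ := fun x => g a + g' a * (x - a) + C * (x - a)^2 with hp_def
  set p' : ℝ → ℝ := fun x => g' a + 2 * C * (x - a) with hp'_def
  have hp1 : p 1 = g 1 := by
    rw [hp_def, hC_def]
    field_simp
    ring
  have hpa : p a = g a := by simp [hp_def]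
  -- h := g - p
  set h : ℝ → ℝ := fun x => g x - p x with hh_def
  set h' : ℝ → ℝ := fun x => g' x - p' x with hh'_def
  have hpderiv : ∀ x : ℝ, HasDerivAt p (p' x) x := by
    intro x
    have h1 : HasDerivAt (fun y : ℝ => y - a) 1 x := (hasDerivAt_id x).sub_const a
    have h2 : HasDerivAt (fun y : ℝ => g' a * (y - a)) (g' a * 1) x := h1.const_mul _
    have h3 : HasDerivAt (fun y : ℝ => (y - a)^2) (2 * (x - a)^1 * 1) x := h1.pow 2
    have h4 : HasDerivAt (fun y : ℝ => C * (y - a)^2) (C * (2 * (x - a)^1 * 1)) x :=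
      h3.const_mul _
    have h5 := (h2.add h4).const_add (g a)
    have heq : p = fun y => g a + (g' a * (y - a) + C * (y - a)^2) := by
      funext y; rw [hp_def]; ring
    rw [heq]
    refine h5.congr_deriv ?_
    show _ = g' a + 2 * C * (x - a)
    ring
  have hhderiv : ∀ x ∈ Ioo (-1:ℝ) 1, HasDerivAt h (h' x) x := fun x hx =>
    (hderiv x hx).sub (hpderiv x)
  have hpcont : Continuous p := by
    rw [hp_def]; continuity
  have hhcont : ContinuousOn h (Icc (-1:ℝ) 1) := hcont.sub hpcont.continuousOn
  have hha : h a = 0 := by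
    show g a - p a = 0
    rw [hpa]; ring
  have hh1 : h 1 = 0 := by
    show g 1 - p 1 = 0
    rw [hp1]; ring
  -- h' is convex on Ioo
  have hconv' : ConvexOn ℝ (Ioo (-1:ℝ) 1) h' := by
    apply hconv.sub
    constructor
    · exact (convex_Ioo _ _)
    · intro x _ y _ α β hα hβ hαβ
      simp only [hp'_def, smul_eq_mul]
      apply le_of_eq
      linear_combination (g' a - 2*C*a) * hαβ
  -- Rolle on [a, 1]
  obtain ⟨ξ, hξmem, hξ0⟩ : ∃ ξ ∈ Ioo a 1, h' ξ = 0 := by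
    apply exists_hasDerivAt_eq_zero ha2
      (hhcont.mono (Icc_subset_Icc (le_of_lt ha1) le_rfl))
      (by rw [hha, hh1])
    intro x hx
    exact hhderiv x ⟨lt_trans ha1 hx.1, hx.2⟩
  have hξIoo : ξ ∈ Ioo (-1:ℝ) 1 := ⟨lt_trans ha1 hξmem.1, hξmem.2⟩
  have hh'a : h' a = 0 := by
    show g' a - p' a = 0
    simp only [hp'_def]
    ring
  -- Sign of h' : ≥ 0 on (-1, a], ≤ 0 on [a, ξ], ≥ 0 on [ξ, 1)
  -- Differentiability of h on interior sets
  have hdiff : ∀ x ∈ Ioo (-1:ℝ) 1, deriv h x = h' x := fun x hx => (hhderiv x hx).deriv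
  -- Key: g x ≤ p x on Icc (-1) 1, i.e. h x ≤ 0
  have key : ∀ x ∈ Icc (-1:ℝ) 1, g x ≤ p x := by
    intro x hx
    rw [← sub_nonpos]
    show h x ≤ 0
    rcases le_or_gt x a with hxa | hxa
    · -- h monotone on [-1, a], h a = 0
      have hmono : MonotoneOn h (Icc (-1:ℝ) a) := by
        apply monotoneOn_of_deriv_nonneg (convex_Icc _ _)
          (hhcont.mono (Icc_subset_Icc le_rfl (le_of_lt ha2)))
        · intro y hy
          rw [interior_Icc] at hy
          have hy' : y ∈ Ioo (-1:ℝ) 1 := ⟨hy.1, lt_trans hy.2 ha2⟩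
          exact (hhderiv y hy').differentiableAt.differentiableWithinAt
        · intro y hy
          rw [interior_Icc] at hy
          have hy' : y ∈ Ioo (-1:ℝ) 1 := ⟨hy.1, lt_trans hy.2 ha2⟩
          rw [hdiff y hy']
          exact cvx_nonneg_left hconv' hy' hξIoo hh'a hξ0 hy.2 hξmem.1
      calc h x ≤ h a := hmono ⟨hx.1, hxa⟩ ⟨le_of_lt ha1, le_rfl⟩ hxa
        _ = 0 := hha
    · rcases le_or_gt x ξ with hxξ | hxξ
      · -- h antitone on [a, ξ], h a = 0
        have hanti : AntitoneOn h (Icc a ξ) := by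
          apply antitoneOn_of_deriv_nonpos (convex_Icc _ _)
            (hhcont.mono (Icc_subset_Icc (le_of_lt ha1) (le_of_lt hξIoo.2)))
          · intro y hy
            rw [interior_Icc] at hy
            have hy' : y ∈ Ioo (-1:ℝ) 1 := ⟨lt_trans ha1 hy.1, lt_trans hy.2 hξIoo.2⟩
            exact (hhderiv y hy').differentiableAt.differentiableWithinAt
          · intro y hy
            rw [interior_Icc] at hy
            have hy' : y ∈ Ioo (-1:ℝ) 1 := ⟨lt_trans ha1 hy.1, lt_trans hy.2 hξIoo.2⟩
            rw [hdiff y hy']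
            exact cvx_nonpos_between hconv' haIoo hξIoo hh'a hξ0 ⟨le_of_lt hy.1, le_of_lt hy.2⟩
        calc h x ≤ h a := hanti ⟨le_rfl, le_of_lt (lt_of_lt_of_le hxa hxξ)⟩
              ⟨le_of_lt hxa, hxξ⟩ (le_of_lt hxa)
          _ = 0 := hha
      · -- h monotone on [ξ, 1], h 1 = 0
        have hmono : MonotoneOn h (Icc ξ (1:ℝ)) := by
          apply monotoneOn_of_deriv_nonneg (convex_Icc _ _)
            (hhcont.mono (Icc_subset_Icc (le_of_lt hξIoo.1) le_rfl))
          · intro y hy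
            rw [interior_Icc] at hy
            have hy' : y ∈ Ioo (-1:ℝ) 1 := ⟨lt_trans hξIoo.1 hy.1, hy.2⟩
            exact (hhderiv y hy').differentiableAt.differentiableWithinAt
          · intro y hy
            rw [interior_Icc] at hy
            have hy' : y ∈ Ioo (-1:ℝ) 1 := ⟨lt_trans hξIoo.1 hy.1, hy.2⟩
            rw [hdiff y hy']
            exact cvx_nonneg_right hconv' haIoo hy' hh'a hξ0 hξmem.1 hy.1
        calc h x ≤ h 1 := hmono ⟨le_of_lt hxξ, hx.2⟩ ⟨le_of_lt hξIoo.2, le_rfl⟩ hx.2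
          _ = 0 := hh1
  -- sum up
  have hsum_le : ∑ i, g (t i) ≤ ∑ i, p (t i) :=
    Finset.sum_le_sum (fun i _ => key (t i) (ht i))
  have hcard : (Finset.univ : Finset (Fin (d+1))).card = d + 1 := by simp
  have hexp : ∑ i, p (t i)
      = C * (∑ i, (t i)^2) + (g' a - 2*C*a) * (∑ i, t i)
        + ((d:ℝ)+1) * (g a - g' a * a + C * a^2) := by
    have : ∀ i : Fin (d+1), p (t i)
        = C * (t i)^2 + (g' a - 2*C*a) * (t i) + (g a - g' a * a + C * a^2) := by
      intro i; rw [hp_def]; ring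
    rw [Finset.sum_congr rfl (fun i _ => this i)]
    rw [Finset.sum_add_distrib, Finset.sum_add_distrib, ← Finset.mul_sum, ← Finset.mul_sum,
      Finset.sum_const, hcard]
    ring
  rw [hexp, hsum, hsq] at hsum_le
  refine hsum_le.trans_eq ?_
  rw [← hp1, hp_def, ha_def]
  field_simp
  ring
end

section
/- Let d ≥ 2, g : [-1,1] → ℝ continuous on [-1,1], differentiable on (-1,1) with g' strictly convex on (-1,1). If t_0,...,t_d ∈ (-1,1] satisfy ∑ t_i = 0, ∑ t_i² = (d+1)/d, and not all of the multiset {t_i} equals {-1, 1/d, ..., 1/d}, i.e., t_i > -1 for all i, then g(-1) + d·g(1/d) < ∑_{i=0}^d g(t_i). -/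
open Set

/-- Sign pattern of a strictly convex function vanishing at two points. -/
lemma strictConvexOn_sign {f : ℝ → ℝ} {s : Set ℝ} (hcv : StrictConvexOn ℝ s f)
    {p q : ℝ} (hp : p ∈ s) (hq : q ∈ s) (hpq : p < q)
    (hfp : f p = 0) (hfq : f q = 0) :
    (∀ x ∈ s, p < x → x < q → f x < 0) ∧
    (∀ x ∈ s, q < x → 0 < f x) ∧
    (∀ x ∈ s, x < p → 0 < f x) := by
  refine ⟨?_, ?_, ?_⟩
  · intro x hx h1 h2
    set a : ℝ := (q - x)/(q - p) with ha_def
    set b : ℝ := (x - p)/(q - p) with hb_def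
    have hqp : (0:ℝ) < q - p := by linarith
    have ha : 0 < a := by apply div_pos <;> linarith
    have hb : 0 < b := by apply div_pos <;> linarith
    have hab : a + b = 1 := by rw [ha_def, hb_def]; field_simp; ring
    have hx' : a • p + b • q = x := by
      simp only [smul_eq_mul, ha_def, hb_def]; field_simp; ring
    have key := hcv.2 hp hq (ne_of_lt hpq) ha hb hab
    rw [hx', hfp, hfq, smul_eq_mul, smul_eq_mul] at key
    linarith [key]
  · intro x hx hqx
    set a : ℝ := (x - q)/(x - p) with ha_def
    set b : ℝ := (q - p)/(x - p) with hb_def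
    have hxp : (0:ℝ) < x - p := by linarith
    have ha : 0 < a := by apply div_pos <;> linarith
    have hb : 0 < b := by apply div_pos <;> linarith
    have hab : a + b = 1 := by rw [ha_def, hb_def]; field_simp; ring
    have hq' : a • p + b • x = q := by
      simp only [smul_eq_mul, ha_def, hb_def]; field_simp; ring
    have key := hcv.2 hp hx (by intro hc; subst hc; linarith) ha hb hab
    rw [hq', hfq, hfp, smul_eq_mul, smul_eq_mul] at key
    by_contra hfx
    push_neg at hfx
    nlinarith [mul_nonneg hb.le (neg_nonneg.mpr hfx)]
  · intro x hx hxp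
    set a : ℝ := (q - p)/(q - x) with ha_def
    set b : ℝ := (p - x)/(q - x) with hb_def
    have hqx : (0:ℝ) < q - x := by linarith
    have ha : 0 < a := by apply div_pos <;> linarith
    have hb : 0 < b := by apply div_pos <;> linarith
    have hab : a + b = 1 := by rw [ha_def, hb_def]; field_simp; ring
    have hp' : a • x + b • q = p := by
      simp only [smul_eq_mul, ha_def, hb_def]; field_simp; ring
    have key := hcv.2 hx hq (by intro hc; subst hc; linarith) ha hb hab
    rw [hp', hfp, hfq, smul_eq_mul, smul_eq_mul] at key
    by_contra hfx
    push_neg at hfx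
    nlinarith [mul_nonneg ha.le (neg_nonneg.mpr hfx)]

/-- Key positivity lemma: if `h(-1) = h(m) = 0`, `h'(m) = 0`, and `h'` is strictly
convex on `(-1,1)`, then `h > 0` on `(-1,1] \ {m}`. -/
lemma key_pos (m : ℝ) (hm0 : -1 < m) (hm1 : m < 1) (h h' : ℝ → ℝ)
    (hc : ContinuousOn h (Set.Icc (-1:ℝ) 1))
    (hder : ∀ x ∈ Set.Ioo (-1:ℝ) 1, HasDerivAt h (h' x) x)
    (hcv : StrictConvexOn ℝ (Set.Ioo (-1:ℝ) 1) h')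
    (hneg1 : h (-1) = 0) (hhm : h m = 0) (hh'm : h' m = 0) :
    ∀ x ∈ Set.Ioc (-1:ℝ) 1, x ≠ m → 0 < h x := by
  have hmIoo : m ∈ Ioo (-1:ℝ) 1 := ⟨hm0, hm1⟩
  -- Rolle on [-1, m]
  obtain ⟨ξ, hξmem, hξ⟩ : ∃ ξ ∈ Ioo (-1:ℝ) m, h' ξ = 0 := by
    apply exists_hasDerivAt_eq_zero hm0 (hc.mono (Icc_subset_Icc le_rfl hm1.le))
      (by rw [hneg1, hhm])
    intro x hx
    exact hder x ⟨hx.1, hx.2.trans hm1⟩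
  have hξIoo : ξ ∈ Ioo (-1:ℝ) 1 := ⟨hξmem.1, hξmem.2.trans hm1⟩
  obtain ⟨hmid, hright, hleft⟩ := strictConvexOn_sign hcv hξIoo hmIoo hξmem.2 hξ hh'm
  -- derivative facts on subintervals
  have derivEq : ∀ x ∈ Ioo (-1:ℝ) 1, deriv h x = h' x := fun x hx => (hder x hx).deriv
  -- h strictly increasing on [-1, ξ]
  have hIncL : StrictMonoOn h (Icc (-1:ℝ) ξ) := by
    apply strictMonoOn_of_deriv_pos (convex_Icc _ _)
      (hc.mono (Icc_subset_Icc le_rfl hξIoo.2.le))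
    intro x hx
    rw [interior_Icc] at hx
    have hx' : x ∈ Ioo (-1:ℝ) 1 := ⟨hx.1, hx.2.trans hξIoo.2⟩
    rw [derivEq x hx']
    exact hleft x hx' hx.2
  -- h strictly decreasing on [ξ, m]
  have hDec : StrictAntiOn h (Icc ξ m) := by
    apply strictAntiOn_of_deriv_neg (convex_Icc _ _)
      (hc.mono (Icc_subset_Icc hξIoo.1.le hm1.le))
    intro x hx
    rw [interior_Icc] at hx
    have hx' : x ∈ Ioo (-1:ℝ) 1 := ⟨hξIoo.1.trans hx.1, hx.2.trans hm1⟩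
    rw [derivEq x hx']
    exact hmid x hx' hx.1 hx.2
  -- h strictly increasing on [m, 1]
  have hIncR : StrictMonoOn h (Icc m (1:ℝ)) := by
    apply strictMonoOn_of_deriv_pos (convex_Icc _ _)
      (hc.mono (Icc_subset_Icc hm0.le le_rfl))
    intro x hx
    rw [interior_Icc] at hx
    have hx' : x ∈ Ioo (-1:ℝ) 1 := ⟨hm0.trans hx.1, hx.2⟩
    rw [derivEq x hx']
    exact hright x hx' hx.1
  intro x hx hxm
  rcases lt_trichotomy x m with hlt | heq | hgt
  · rcases le_or_gt x ξ with hle | hgt'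
    · -- x ∈ (-1, ξ]
      have := hIncL (left_mem_Icc.mpr (by linarith [hξmem.1])) ⟨hx.1.le, hle⟩ hx.1
      rw [hneg1] at this; exact this
    · -- x ∈ (ξ, m)
      have := hDec ⟨hgt'.le, hlt.le⟩ (right_mem_Icc.mpr (by linarith [hξmem.2])) hlt
      rw [hhm] at this; exact this
  · exact absurd heq hxm
  · have := hIncR (left_mem_Icc.mpr hm1.le) ⟨hgt.le, hx.2⟩ hgt
    rw [hhm] at this; exact this

theorem stmt_3 (d : ℕ) (hd : 2 ≤ d) (g : ℝ → ℝ) (g' : ℝ → ℝ)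
    (hcont : ContinuousOn g (Set.Icc (-1:ℝ) 1))
    (hderiv : ∀ t ∈ Set.Ioo (-1:ℝ) 1, HasDerivAt g (g' t) t)
    (hconv : StrictConvexOn ℝ (Set.Ioo (-1:ℝ) 1) g')
    (t : Fin (d+1) → ℝ) (ht : ∀ i, t i ∈ Set.Ioc (-1:ℝ) 1)
    (hsum : ∑ i, t i = 0) (hsq : ∑ i, (t i)^2 = ((d:ℝ)+1)/(d:ℝ)) :
    g (-1) + (d:ℝ) * g (1/(d:ℝ)) < ∑ i, g (t i) := by
  have hd1 : (1:ℝ) < (d:ℝ) := by exact_mod_cast (by omega : 1 < d)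
  have hd0 : (0:ℝ) < (d:ℝ) := by linarith
  set m : ℝ := 1/(d:ℝ) with hm_def
  have hm0 : 0 < m := by positivity
  have hm1 : m < 1 := by rw [hm_def, div_lt_one hd0]; exact hd1
  have hmm1 : -1 < m := by linarith
  set e : ℝ := 1 + m with he_def
  have he : 0 < e := by linarith
  set c : ℝ := (g (-1) - g m + e * g' m) / e^2 with hc_def
  set L : ℝ → ℝ := fun x => g m + g' m * (x - m) + c * (x - m)^2 with hL_def
  set h : ℝ → ℝ := fun x => g x - L x with hh_def
  set h' : ℝ → ℝ := fun x => g' x - (g' m + c * (2*(x - m))) with hh'_def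
  have hLc : Continuous L := by rw [hL_def]; fun_prop
  have hhc : ContinuousOn h (Icc (-1:ℝ) 1) := by
    rw [hh_def]; exact hcont.sub hLc.continuousOn
  have hLd : ∀ x : ℝ, HasDerivAt L (g' m + c * (2*(x-m))) x := by
    intro x
    have h1 : HasDerivAt (fun y : ℝ => y - m) 1 x := (hasDerivAt_id x).sub_const m
    have h2 : HasDerivAt (fun y : ℝ => (y-m)^2) (2*(x-m)) x := by
      have := h1.fun_pow 2
      norm_num at this
      convert this using 1
    have h3 := ((h1.const_mul (g' m)).const_add (g m)).fun_add (h2.const_mul c)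
    rw [hL_def]
    rw [show g' m + c * (2*(x-m)) = g' m * 1 + c * (2*(x-m)) by ring]
    exact h3
  have hhd : ∀ x ∈ Ioo (-1:ℝ) 1, HasDerivAt h (h' x) x := by
    intro x hx
    rw [hh_def, hh'_def]
    exact (hderiv x hx).sub (hLd x)
  have hhm : h m = 0 := by simp [hh_def, hL_def]
  have hh'm : h' m = 0 := by simp [hh'_def]
  have hneg1 : h (-1) = 0 := by
    have hee : e ≠ 0 := ne_of_gt he
    simp only [hh_def, hL_def, hc_def, he_def]
    field_simp
    ring
  have hcv : StrictConvexOn ℝ (Ioo (-1:ℝ) 1) h' := by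
    constructor
    · exact convex_Ioo _ _
    · intro x hx y hy hxy a b ha hb hab
      have key := hconv.2 hx hy hxy ha hb hab
      simp only [smul_eq_mul, hh'_def] at key ⊢
      have lin : g' m + c * (2*(a*x + b*y - m)) =
          a*(g' m + c * (2*(x-m))) + b*(g' m + c * (2*(y-m))) := by
        have hb1 : b = 1 - a := by linarith
        rw [hb1]; ring
      linarith [key, lin]
  have hpos := key_pos m hmm1 hm1 h h' hhc hhd hcv hneg1 hhm hh'm
  have hnn : ∀ i, 0 ≤ h (t i) := by
    intro i
    rcases eq_or_ne (t i) m with heq | hne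
    · rw [heq, hhm]
    · exact (hpos (t i) (ht i) hne).le
  have hex : ∃ j, t j ≠ m := by
    by_contra hall
    push_neg at hall
    have hs : ∑ i, t i = ((d:ℝ)+1) * m := by
      rw [Finset.sum_congr rfl (fun i _ => hall i), Finset.sum_const, Finset.card_univ]
      simp [Fintype.card_fin]
    rw [hsum] at hs
    nlinarith [hs, hm0, hd0]
  obtain ⟨j, hj⟩ := hex
  have hsumh : 0 < ∑ i, h (t i) :=
    Finset.sum_pos' (fun i _ => hnn i) ⟨j, Finset.mem_univ j, hpos (t j) (ht j) hj⟩
  have sumL : ∑ i, L (t i) = g (-1) + (d:ℝ) * g m := by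
    have expand : ∀ i, L (t i) = (g m - g' m * m + c * m^2) + (g' m - 2*c*m) * (t i)
        + c * (t i)^2 := by
      intro i; simp only [hL_def]; ring
    rw [Finset.sum_congr rfl (fun i _ => expand i), Finset.sum_add_distrib,
      Finset.sum_add_distrib, ← Finset.mul_sum, ← Finset.mul_sum, hsum, hsq,
      Finset.sum_const, Finset.card_univ]
    simp only [Fintype.card_fin, nsmul_eq_mul, mul_zero, add_zero]
    push_cast
    rw [hc_def, he_def, hm_def]
    have hdd : (d:ℝ) ≠ 0 := ne_of_gt hd0
    have hee : (1:ℝ) + 1/(d:ℝ) ≠ 0 := by positivity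
    field_simp
    ring
  have hsplit : ∑ i, g (t i) = ∑ i, h (t i) + ∑ i, L (t i) := by
    rw [← Finset.sum_add_distrib]
    exact Finset.sum_congr rfl (fun i _ => by simp [hh_def])
  rw [hsplit, sumL]
  linarith
end

section
/- Let d ≥ 2 and f : [0,4] → (-∞,∞] be finite and convex on (0,4] with f(0) = lim_{t→0⁺} f(t). Then the function u(t) = f(2+2dt) + d·f(2-2t) is non-increasing on [-1/d, 0]. If f is strictly convex on (0,4], then u is strictly decreasing on [-1/d, 0]. -/
open Set Filter Topology

section core
variable (d : ℕ) (g : ℝ → ℝ) {s t : ℝ}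

lemma core_facts (hd : 2 ≤ d) (hs : -(1/(d:ℝ)) < s) (hst : s < t) (ht : t ≤ 0) :
    ∃ lam mu : ℝ, 0 < lam ∧ 0 < 1 - lam ∧ 0 < mu ∧ 0 < 1 - mu ∧
      lam + (d:ℝ) * mu = 1 ∧
      lam * (2 + 2*(d:ℝ)*s) + (1-lam) * (2 - 2*s) = 2 + 2*(d:ℝ)*t ∧
      mu * (2 + 2*(d:ℝ)*s) + (1-mu) * (2 - 2*s) = 2 - 2*t ∧
      (2 + 2*(d:ℝ)*s) ∈ Set.Ioc (0:ℝ) 4 ∧ (2 - 2*s) ∈ Set.Ioc (0:ℝ) 4 ∧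
      (2 + 2*(d:ℝ)*s) ≠ (2 - 2*s) := by
  have hd2 : (2:ℝ) ≤ (d:ℝ) := by exact_mod_cast hd
  have hdpos : (0:ℝ) < d := by linarith
  have hsneg : s < 0 := lt_of_lt_of_le hst ht
  have hDpos : (0:ℝ) < (1 + d) * (-s) := mul_pos (by positivity) (by linarith)
  have hDne : ((1:ℝ) + d) * (-s) ≠ 0 := ne_of_gt hDpos
  have h1 : (d:ℝ) * (-(1/(d:ℝ))) = -1 := by field_simp
  have hdinv : -1 < (d:ℝ) * s := by
    have := mul_lt_mul_of_pos_left hs hdpos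
    rwa [h1] at this
  refine ⟨1 - (d:ℝ)*(t-s)/((1+d)*(-s)), (t-s)/((1+d)*(-s)), ?_, ?_, ?_, ?_, ?_, ?_, ?_, ?_, ?_, ?_⟩
  · rw [sub_pos, div_lt_one hDpos]; nlinarith
  · have : 0 < (d:ℝ)*(t-s)/((1+d)*(-s)) :=
      div_pos (mul_pos hdpos (by linarith)) hDpos
    linarith
  · exact div_pos (by linarith) hDpos
  · rw [sub_pos, div_lt_one hDpos]; nlinarith
  · field_simp; ring
  · have e1 : (d:ℝ)*(t-s)/((1+d)*(-s)) * ((1+d)*(-s)) = (d:ℝ)*(t-s) :=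
      div_mul_cancel₀ _ hDne
    linear_combination 2 * e1
  · have e2 : (t-s)/((1+d)*(-s)) * ((1+d)*(-s)) = (t-s) := div_mul_cancel₀ _ hDne
    linear_combination (-2) * e2
  · constructor <;> nlinarith
  · constructor <;> nlinarith
  · nlinarith

lemma core_real (hd : 2 ≤ d) (hconv : ConvexOn ℝ (Set.Ioc (0:ℝ) 4) g)
    (hs : -(1/(d:ℝ)) < s) (hst : s < t) (ht : t ≤ 0) :
    g (2 + 2*(d:ℝ)*t) + (d:ℝ) * g (2 - 2*t) ≤ g (2 + 2*(d:ℝ)*s) + (d:ℝ) * g (2 - 2*s) := by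
  obtain ⟨lam, mu, hlam0, hlam1, hmu0, hmu1, hcoef, hxid, hyid, hxs, hys, hne⟩ :=
    core_facts d hd hs hst ht
  have hdpos : (0:ℝ) ≤ d := by positivity
  have A := hconv.2 hxs hys hlam0.le hlam1.le (by ring)
  have B := hconv.2 hxs hys hmu0.le hmu1.le (by ring)
  simp only [smul_eq_mul] at A B
  rw [hxid] at A; rw [hyid] at B
  set X := g (2 + 2*(d:ℝ)*s)
  set Y := g (2 - 2*s)
  calc g (2 + 2*(d:ℝ)*t) + (d:ℝ) * g (2 - 2*t)
      ≤ (lam*X + (1-lam)*Y) + (d:ℝ)*(mu*X + (1-mu)*Y) :=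
        add_le_add A (mul_le_mul_of_nonneg_left B hdpos)
    _ = X + (d:ℝ)*Y := by linear_combination (X - Y) * hcoef

lemma core_real_strict (hd : 2 ≤ d) (hconv : StrictConvexOn ℝ (Set.Ioc (0:ℝ) 4) g)
    (hs : -(1/(d:ℝ)) < s) (hst : s < t) (ht : t ≤ 0) :
    g (2 + 2*(d:ℝ)*t) + (d:ℝ) * g (2 - 2*t) < g (2 + 2*(d:ℝ)*s) + (d:ℝ) * g (2 - 2*s) := by
  obtain ⟨lam, mu, hlam0, hlam1, hmu0, hmu1, hcoef, hxid, hyid, hxs, hys, hne⟩ :=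
    core_facts d hd hs hst ht
  have hdpos : (0:ℝ) ≤ d := by positivity
  have A := hconv.2 hxs hys hne hlam0 hlam1 (by ring)
  have B := hconv.convexOn.2 hxs hys hmu0.le hmu1.le (by ring)
  simp only [smul_eq_mul] at A B
  rw [hxid] at A; rw [hyid] at B
  set X := g (2 + 2*(d:ℝ)*s)
  set Y := g (2 - 2*s)
  calc g (2 + 2*(d:ℝ)*t) + (d:ℝ) * g (2 - 2*t)
      < (lam*X + (1-lam)*Y) + (d:ℝ)*(mu*X + (1-mu)*Y) :=
        add_lt_add_of_lt_of_le A (mul_le_mul_of_nonneg_left B hdpos)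
    _ = X + (d:ℝ)*Y := by linear_combination (X - Y) * hcoef

end core

section main
variable {d : ℕ} {f : ℝ → EReal}

lemma u_eq (hne_bot : ∀ t ∈ Set.Icc (0:ℝ) 4, f t ≠ ⊥)
    (hfin : ∀ t ∈ Set.Ioc (0:ℝ) 4, f t ≠ ⊤) (hd : 2 ≤ d) {t : ℝ}
    (h1 : -(1/(d:ℝ)) < t) (h2 : t ≤ 0) :
    f (2 + 2*(d:ℝ)*t) + ((d:ℝ) : EReal) * f (2 - 2*t)
      = (((f (2 + 2*(d:ℝ)*t)).toReal + (d:ℝ) * (f (2 - 2*t)).toReal : ℝ) : EReal) := by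
  have hd2 : (2:ℝ) ≤ (d:ℝ) := by exact_mod_cast hd
  have hdpos : (0:ℝ) < d := by linarith
  have h1' : (d:ℝ) * (-(1/(d:ℝ))) = -1 := by field_simp
  have hdinv : -1 < (d:ℝ) * t := by
    have := mul_lt_mul_of_pos_left h1 hdpos
    rwa [h1'] at this
  have ha : (2 + 2*(d:ℝ)*t) ∈ Set.Ioc (0:ℝ) 4 := by constructor <;> nlinarith
  have hb : (2 - 2*t) ∈ Set.Ioc (0:ℝ) 4 := by constructor <;> nlinarith
  rw [← EReal.coe_toReal (hfin _ ha) (hne_bot _ (Set.Ioc_subset_Icc_self ha)),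
    ← EReal.coe_toReal (hfin _ hb) (hne_bot _ (Set.Ioc_subset_Icc_self hb))]
  push_cast
  rfl

lemma u_mono_interior (hne_bot : ∀ t ∈ Set.Icc (0:ℝ) 4, f t ≠ ⊥)
    (hfin : ∀ t ∈ Set.Ioc (0:ℝ) 4, f t ≠ ⊤) (hd : 2 ≤ d)
    (hconv : ConvexOn ℝ (Set.Ioc (0:ℝ) 4) (fun t => (f t).toReal)) {s t : ℝ}
    (hs : -(1/(d:ℝ)) < s) (hst : s < t) (ht : t ≤ 0) :
    f (2 + 2*(d:ℝ)*t) + ((d:ℝ) : EReal) * f (2 - 2*t)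
      ≤ f (2 + 2*(d:ℝ)*s) + ((d:ℝ) : EReal) * f (2 - 2*s) := by
  rw [u_eq hne_bot hfin hd (lt_trans hs hst) ht,
    u_eq hne_bot hfin hd hs (le_of_lt (lt_of_lt_of_le hst ht))]
  exact EReal.coe_le_coe_iff.mpr (core_real d _ hd hconv hs hst ht)

lemma u_strict_interior (hne_bot : ∀ t ∈ Set.Icc (0:ℝ) 4, f t ≠ ⊥)
    (hfin : ∀ t ∈ Set.Ioc (0:ℝ) 4, f t ≠ ⊤) (hd : 2 ≤ d)
    (hconv : StrictConvexOn ℝ (Set.Ioc (0:ℝ) 4) (fun t => (f t).toReal)) {s t : ℝ}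
    (hs : -(1/(d:ℝ)) < s) (hst : s < t) (ht : t ≤ 0) :
    f (2 + 2*(d:ℝ)*t) + ((d:ℝ) : EReal) * f (2 - 2*t)
      < f (2 + 2*(d:ℝ)*s) + ((d:ℝ) : EReal) * f (2 - 2*s) := by
  rw [u_eq hne_bot hfin hd (lt_trans hs hst) ht,
    u_eq hne_bot hfin hd hs (le_of_lt (lt_of_lt_of_le hst ht))]
  exact EReal.coe_lt_coe_iff.mpr (core_real_strict d _ hd hconv hs hst ht)

end main

section endpoint
variable {d : ℕ} {f : ℝ → EReal}

lemma u_mono_endpoint (hne_bot : ∀ t ∈ Set.Icc (0:ℝ) 4, f t ≠ ⊥)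
    (hfin : ∀ t ∈ Set.Ioc (0:ℝ) 4, f t ≠ ⊤) (hd : 2 ≤ d)
    (hconv : ConvexOn ℝ (Set.Ioc (0:ℝ) 4) (fun t => (f t).toReal))
    (hlim : Filter.Tendsto f (nhdsWithin 0 (Set.Ioi 0)) (nhds (f 0))) {t : ℝ}
    (hst : -(1/(d:ℝ)) < t) (ht : t ≤ 0) :
    f (2 + 2*(d:ℝ)*t) + ((d:ℝ) : EReal) * f (2 - 2*t)
      ≤ f (2 + 2*(d:ℝ)*(-(1/(d:ℝ)))) + ((d:ℝ) : EReal) * f (2 - 2*(-(1/(d:ℝ)))) := by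
  have hd2 : (2:ℝ) ≤ (d:ℝ) := by exact_mod_cast hd
  have hdpos : (0:ℝ) < d := by linarith
  set s : ℝ := -(1/(d:ℝ)) with hs_def
  have hs0 : s < 0 := by rw [hs_def]; simp; positivity
  have hzero : 2 + 2*(d:ℝ)*s = 0 := by rw [hs_def]; field_simp; ring
  have hinv : (1:ℝ)/(d:ℝ) ≤ 1/2 := by
    apply one_div_le_one_div_of_le <;> linarith
  have h0 : (0:ℝ) < 1/(d:ℝ) := by positivity
  have hys : (2 - 2*s) ∈ Set.Ioc (0:ℝ) 4 := by
    rw [hs_def]; constructor <;> nlinarith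
  have hysIoo : (2 - 2*s) ∈ Set.Ioo (0:ℝ) 4 := by
    rw [hs_def]; constructor <;> nlinarith
  have hfb : f (2 - 2*s) = (((f (2 - 2*s)).toReal : ℝ) : EReal) :=
    (EReal.coe_toReal (hfin _ hys) (hne_bot _ (Set.Ioc_subset_Icc_self hys))).symm
  have hf0bot : f 0 ≠ ⊥ := hne_bot 0 ⟨le_refl 0, by norm_num⟩
  by_cases hf0top : f 0 = ⊤
  · rw [hzero, hf0top, hfb, ← EReal.coe_mul, EReal.top_add_coe]
    exact le_top
  · -- f 0 finite: limit argument
    have haff : Filter.Tendsto (fun x : ℝ => 2 + 2*(d:ℝ)*x) (nhdsWithin s (Set.Ioi s))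
        (nhdsWithin 0 (Set.Ioi 0)) := by
      rw [tendsto_nhdsWithin_iff]
      constructor
      · have hc : Continuous (fun x : ℝ => 2 + 2*(d:ℝ)*x) := by continuity
        have := hc.tendsto s
        rw [hzero] at this
        exact this.mono_left nhdsWithin_le_nhds
      · filter_upwards [self_mem_nhdsWithin] with x hx
        have hx' : s < x := hx
        show (0:ℝ) < 2 + 2*(d:ℝ)*x
        nlinarith
    have h2 : Filter.Tendsto (fun x : ℝ => (f (2 + 2*(d:ℝ)*x)).toReal)
        (nhdsWithin s (Set.Ioi s)) (nhds (f 0).toReal) :=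
      (EReal.tendsto_toReal hf0top hf0bot).comp (hlim.comp haff)
    have hcg : ContinuousAt (fun t => (f t).toReal) (2 - 2*s) := by
      have h := hconv.continuousOn_interior
      rw [interior_Ioc] at h
      exact h.continuousAt (isOpen_Ioo.mem_nhds hysIoo)
    have h3 : Filter.Tendsto (fun x : ℝ => (f (2 - 2*x)).toReal)
        (nhdsWithin s (Set.Ioi s)) (nhds ((f (2 - 2*s)).toReal)) := by
      have hca : Continuous (fun x : ℝ => 2 - 2*x) := by continuity
      exact (Filter.Tendsto.comp hcg (hca.tendsto s)).mono_left nhdsWithin_le_nhds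
    have hphi : Filter.Tendsto
        (fun x : ℝ => (f (2 + 2*(d:ℝ)*x)).toReal + (d:ℝ) * (f (2 - 2*x)).toReal)
        (nhdsWithin s (Set.Ioi s)) (nhds ((f 0).toReal + (d:ℝ) * (f (2 - 2*s)).toReal)) :=
      h2.add (h3.const_mul _)
    have hcoe : Filter.Tendsto
        (fun x : ℝ => ((((f (2 + 2*(d:ℝ)*x)).toReal + (d:ℝ) * (f (2 - 2*x)).toReal : ℝ)) : EReal))
        (nhdsWithin s (Set.Ioi s))
        (nhds ((((f 0).toReal + (d:ℝ) * (f (2 - 2*s)).toReal : ℝ) : EReal))) :=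
      (continuous_coe_real_ereal.tendsto _).comp hphi
    have hval : (((f 0).toReal + (d:ℝ) * (f (2 - 2*s)).toReal : ℝ) : EReal)
        = f (2 + 2*(d:ℝ)*s) + ((d:ℝ) : EReal) * f (2 - 2*s) := by
      rw [hzero, hfb, ← EReal.coe_toReal hf0top hf0bot]
      push_cast
      rfl
    rw [hval] at hcoe
    have hu : Filter.Tendsto
        (fun x : ℝ => f (2 + 2*(d:ℝ)*x) + ((d:ℝ) : EReal) * f (2 - 2*x))
        (nhdsWithin s (Set.Ioi s))
        (nhds (f (2 + 2*(d:ℝ)*s) + ((d:ℝ) : EReal) * f (2 - 2*s))) := by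
      apply Filter.Tendsto.congr' _ hcoe
      filter_upwards [Ioo_mem_nhdsGT_of_mem ⟨le_refl s, hs0⟩] with x hx
      exact (u_eq hne_bot hfin hd hx.1 hx.2.le).symm
    refine ge_of_tendsto hu ?_
    filter_upwards [Ioo_mem_nhdsGT_of_mem ⟨le_refl s, hst⟩] with x hx
    exact u_mono_interior hne_bot hfin hd hconv hx.1 hx.2 ht

end endpoint

section final
variable {d : ℕ} {f : ℝ → EReal}

lemma u_strict_endpoint (hne_bot : ∀ t ∈ Set.Icc (0:ℝ) 4, f t ≠ ⊥)
    (hfin : ∀ t ∈ Set.Ioc (0:ℝ) 4, f t ≠ ⊤) (hd : 2 ≤ d)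
    (hconv : StrictConvexOn ℝ (Set.Ioc (0:ℝ) 4) (fun t => (f t).toReal))
    (hlim : Filter.Tendsto f (nhdsWithin 0 (Set.Ioi 0)) (nhds (f 0))) {t : ℝ}
    (hst : -(1/(d:ℝ)) < t) (ht : t ≤ 0) :
    f (2 + 2*(d:ℝ)*t) + ((d:ℝ) : EReal) * f (2 - 2*t)
      < f (2 + 2*(d:ℝ)*(-(1/(d:ℝ)))) + ((d:ℝ) : EReal) * f (2 - 2*(-(1/(d:ℝ)))) := by
  set m : ℝ := (-(1/(d:ℝ)) + t)/2 with hm_def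
  have hm1 : -(1/(d:ℝ)) < m := by rw [hm_def]; linarith
  have hm2 : m < t := by rw [hm_def]; linarith
  have hm0 : m ≤ 0 := le_of_lt (lt_of_lt_of_le hm2 ht)
  exact lt_of_lt_of_le (u_strict_interior hne_bot hfin hd hconv hm1 hm2 ht)
    (u_mono_endpoint hne_bot hfin hd hconv.convexOn hlim hm1 hm0)

end final

theorem stmt_7 (d : ℕ) (hd : 2 ≤ d) (f : ℝ → EReal)
    (hne_bot : ∀ t ∈ Set.Icc (0:ℝ) 4, f t ≠ ⊥)
    (hfin : ∀ t ∈ Set.Ioc (0:ℝ) 4, f t ≠ ⊤)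
    (hconv : ConvexOn ℝ (Set.Ioc (0:ℝ) 4) (fun t => (f t).toReal))
    (hlim : Filter.Tendsto f (nhdsWithin 0 (Set.Ioi 0)) (nhds (f 0))) :
    AntitoneOn (fun t => f (2 + 2*(d:ℝ)*t) + ((d:ℝ) : EReal) * f (2 - 2*t))
      (Set.Icc (-(1/(d:ℝ))) 0) ∧
    (StrictConvexOn ℝ (Set.Ioc (0:ℝ) 4) (fun t => (f t).toReal) →
      StrictAntiOn (fun t => f (2 + 2*(d:ℝ)*t) + ((d:ℝ) : EReal) * f (2 - 2*t))
        (Set.Icc (-(1/(d:ℝ))) 0)) := by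
  constructor
  · intro a ha b hb hab
    dsimp only
    rcases eq_or_lt_of_le hab with rfl | h
    · exact le_refl _
    · rcases eq_or_lt_of_le ha.1 with heq | hlt
      · rw [← heq]
        exact u_mono_endpoint hne_bot hfin hd hconv hlim (heq ▸ h) hb.2
      · exact u_mono_interior hne_bot hfin hd hconv hlt h hb.2
  · intro hsc a ha b hb h
    dsimp only
    rcases eq_or_lt_of_le ha.1 with heq | hlt
    · rw [← heq]
      exact u_strict_endpoint hne_bot hfin hd hsc hlim (heq ▸ h) hb.2
    · exact u_strict_interior hne_bot hfin hd hsc hlt h hb.2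
end

section
/- For every d ≥ 2, any (d+1)-point configuration ω = {v_0,...,v_d} ⊂ S^{d-1} satisfies η(ω, S^{d-1}) := max_{x ∈ S^{d-1}} min_{0≤i≤d} |x - v_i| ≥ √(2 - 2/d), with equality if and only if ω is the set of vertices of a regular d-simplex inscribed in S^{d-1}. In particular, the optimal (d+1)-point covering radius of S^{d-1} is √(2 - 2/d). -/
open RealInnerProductSpace Metric

lemma exists_min_face (d : ℕ) (v : Fin (d+1) → EuclideanSpace ℝ (Fin d))
    (m : ℝ) (hm : 0 < m)
    (hcov : ∀ x : EuclideanSpace ℝ (Fin d), ‖x‖ = 1 → ∃ i, m ≤ ⟪v i, x⟫)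
    (j : Fin (d+1)) :
    ∃ z : EuclideanSpace ℝ (Fin d), ‖z‖ ≤ 1 ∧ ⟪v j, z⟫ ≤ 0 ∧
      ∀ i, i ≠ j → ⟪v i, z⟫ = m := by
  classical
  set P : Set (EuclideanSpace ℝ (Fin d)) := {x | ∀ i, ⟪v i, x⟫ ≤ m} with hPdef
  have hP0 : (0:EuclideanSpace ℝ (Fin d)) ∈ P := by
    intro i; simp only [inner_zero_right]; exact hm.le
  have hPconv : Convex ℝ P := by
    have : P = ⋂ i, {x : EuclideanSpace ℝ (Fin d) | ⟪v i, x⟫ ≤ m} := by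
      ext x; simp [hPdef, Set.mem_iInter]
    rw [this]
    exact convex_iInter fun i => convex_halfSpace_le
      ⟨fun a b => inner_add_right _ _ _, fun c a => real_inner_smul_right _ _ _⟩ m
  have hPclosed : IsClosed P := by
    have : P = ⋂ i, {x : EuclideanSpace ℝ (Fin d) | ⟪v i, x⟫ ≤ m} := by
      ext x; simp [hPdef, Set.mem_iInter]
    rw [this]
    exact isClosed_iInter fun i =>
      isClosed_le (Continuous.inner continuous_const continuous_id) continuous_const
  have hPball : P ⊆ Metric.closedBall (0:EuclideanSpace ℝ (Fin d)) 1 := by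
    intro x hx
    rw [Metric.mem_closedBall, dist_zero_right]
    by_contra h
    push_neg at h
    have hx0 : x ≠ 0 := by
      intro h0; rw [h0, norm_zero] at h; linarith
    have hxu : ‖(‖x‖⁻¹ • x : EuclideanSpace ℝ (Fin d))‖ = 1 := by
      rw [norm_smul, norm_inv, norm_norm, inv_mul_cancel₀ (norm_ne_zero_iff.mpr hx0)]
    obtain ⟨i, hi⟩ := hcov _ hxu
    rw [real_inner_smul_right] at hi
    have h1 : ⟪v i, x⟫ ≤ m := hx i
    have h2 : ‖x‖⁻¹ < 1 := by
      rw [inv_lt_one_iff₀]; right; exact h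
    have h3 : ‖x‖⁻¹ * ⟪v i, x⟫ < m := by
      calc ‖x‖⁻¹ * ⟪v i, x⟫ ≤ ‖x‖⁻¹ * m := by
            apply mul_le_mul_of_nonneg_left h1 (by positivity)
        _ < 1 * m := by apply mul_lt_mul_of_pos_right h2 hm
        _ = m := one_mul m
    linarith
  have hPcomp : IsCompact P := by
    rw [Metric.isCompact_iff_isClosed_bounded]
    exact ⟨hPclosed, (Metric.isBounded_closedBall).subset hPball⟩
  -- exposed face minimizing ⟪v j, ·⟫
  set f : EuclideanSpace ℝ (Fin d) →L[ℝ] ℝ := -(innerSL ℝ (v j)) with hf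
  obtain ⟨z0, hz0P, hz0max'⟩ := hPcomp.exists_isMaxOn ⟨0, hP0⟩ (f.continuous.continuousOn)
  have hz0max : ∀ y ∈ P, f y ≤ f z0 := fun y hy => hz0max' hy
  set F : Set (EuclideanSpace ℝ (Fin d)) := {x ∈ P | ∀ y ∈ P, f y ≤ f x} with hFdef
  have hFexp : IsExposed ℝ P F := fun _ => ⟨f, rfl⟩
  have hFne : F.Nonempty := ⟨z0, hz0P, hz0max⟩
  have hFcomp : IsCompact F := hFexp.isCompact hPcomp
  obtain ⟨z, hzF⟩ := hFcomp.extremePoints_nonempty hFne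
  have hzFmem : z ∈ F := hzF.1
  have hzP : z ∈ Set.extremePoints ℝ P :=
    (hFexp.isExtreme).extremePoints_subset_extremePoints hzF
  have hzPm : z ∈ P := hzP.1
  have hj0 : ⟪v j, z⟫ ≤ 0 := by
    have := hzFmem.2 0 hP0
    simp only [hf, ContinuousLinearMap.neg_apply, innerSL_apply_apply, inner_zero_right,
      neg_zero, neg_le, Left.nonneg_neg_iff] at this
    linarith [this]
  -- active set
  set A : Finset (Fin (d+1)) := Finset.univ.filter (fun i => ⟪v i, z⟫ = m) with hA
  have hAj : j ∉ A := by
    simp only [hA, Finset.mem_filter]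
    rintro ⟨-, h⟩; linarith
  have hspan : Submodule.span ℝ (v '' ↑A) = ⊤ := by
    by_contra hne
    have hbot : (Submodule.span ℝ (v '' ↑A))ᗮ ≠ ⊥ := by
      intro h; exact hne (Submodule.orthogonal_eq_bot_iff.mp h)
    obtain ⟨y, hymem, hyne⟩ := Submodule.exists_mem_ne_zero_of_ne_bot hbot
    have hyA : ∀ i ∈ A, ⟪v i, y⟫ = 0 := by
      intro i hi
      have := hymem (v i) (Submodule.subset_span ⟨i, hi, rfl⟩)
      exact this
    set ε : ℝ := Finset.univ.inf' Finset.univ_nonempty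
      (fun i => if ⟪v i, z⟫ = m then 1 else (m - ⟪v i, z⟫) / (|⟪v i, y⟫| + 1)) with hεdef
    have hε : 0 < ε := by
      rw [hεdef, Finset.lt_inf'_iff]
      intro i _
      split_ifs with h
      · norm_num
      · have h1 : ⟪v i, z⟫ ≤ m := hzPm i
        have h2 : ⟪v i, z⟫ < m := lt_of_le_of_ne h1 h
        apply div_pos (by linarith) (by positivity)
    have hkey : ∀ s : ℝ, |s| ≤ ε → z + s • y ∈ P := by
      intro s hs i
      rcases eq_or_ne (⟪v i, z⟫) m with heq | hne'
      · have hiA : i ∈ A := by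
          rw [hA]; exact Finset.mem_filter.mpr ⟨Finset.mem_univ i, heq⟩
        rw [inner_add_right, real_inner_smul_right, hyA i hiA, mul_zero, add_zero]
        exact le_of_eq heq
      · have hle : ε ≤ (m - ⟪v i, z⟫) / (|⟪v i, y⟫| + 1) := by
          have := Finset.inf'_le (b := i)
            (f := fun i => if ⟪v i, z⟫ = m then 1 else (m - ⟪v i, z⟫) / (|⟪v i, y⟫| + 1))
            (Finset.mem_univ i)
          rw [if_neg hne'] at this
          exact le_trans (le_of_eq hεdef) this
        have habs : |⟪v i, y⟫| + 1 > 0 := by positivity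
        have hmul : ε * (|⟪v i, y⟫| + 1) ≤ m - ⟪v i, z⟫ := by
          rw [div_eq_mul_inv] at hle
          calc ε * (|⟪v i, y⟫| + 1)
              ≤ ((m - ⟪v i, z⟫) * (|⟪v i, y⟫| + 1)⁻¹) * (|⟪v i, y⟫| + 1) := by
                apply mul_le_mul_of_nonneg_right hle habs.le
            _ = m - ⟪v i, z⟫ := by field_simp
        rw [inner_add_right, real_inner_smul_right]
        have : s * ⟪v i, y⟫ ≤ m - ⟪v i, z⟫ := by
          calc s * ⟪v i, y⟫ ≤ |s * ⟪v i, y⟫| := le_abs_self _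
            _ = |s| * |⟪v i, y⟫| := abs_mul _ _
            _ ≤ ε * (|⟪v i, y⟫| + 1) := by
                apply mul_le_mul hs (by linarith [le_refl |⟪v i, y⟫|]) (abs_nonneg _)
                  hε.le
            _ ≤ m - ⟪v i, z⟫ := hmul
        linarith
    have h1 : z + ε • y ∈ P := hkey ε (by rw [abs_of_pos hε])
    have h2 : z + (-ε) • y ∈ P := hkey (-ε) (by rw [abs_neg, abs_of_pos hε])
    have hmid : z ∈ openSegment ℝ (z + ε • y) (z + (-ε) • y) := by
      refine ⟨1/2, 1/2, by norm_num, by norm_num, by norm_num, ?_⟩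
      rw [smul_add, smul_add]
      module
    have h0 : ε • y = 0 := by
      have h := hzP.2 h1 h2 hmid
      rwa [add_eq_left] at h
    rcases smul_eq_zero.mp h0 with h | h
    · exact absurd h (ne_of_gt hε)
    · exact hyne h
  have hcard : d ≤ A.card := by
    have h2 : Submodule.span ℝ (↑(A.image v) : Set (EuclideanSpace ℝ (Fin d))) = ⊤ := by
      rwa [Finset.coe_image]
    have h3 : Module.finrank ℝ
        (Submodule.span ℝ (↑(A.image v) : Set (EuclideanSpace ℝ (Fin d)))) ≤ (A.image v).card :=
      finrank_span_finset_le_card _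
    rw [h2, finrank_top] at h3
    rw [finrank_euclideanSpace_fin] at h3
    exact le_trans h3 (Finset.card_image_le)
  have hAeq : A = Finset.univ.erase j := by
    apply Finset.eq_of_subset_of_card_le
    · intro i hi
      exact Finset.mem_erase.mpr ⟨by rintro rfl; exact hAj hi, Finset.mem_univ i⟩
    · rw [Finset.card_erase_of_mem (Finset.mem_univ j), Finset.card_univ, Fintype.card_fin]
      simpa using hcard
  refine ⟨z, ?_, hj0, ?_⟩
  · have := hPball hzPm
    rwa [Metric.mem_closedBall, dist_zero_right] at this
  · intro i hij
    have hiA : i ∈ A := hAeq ▸ Finset.mem_erase.mpr ⟨hij, Finset.mem_univ i⟩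
    exact (Finset.mem_filter.mp hiA).2

lemma key_main (d : ℕ) (v : Fin (d+1) → EuclideanSpace ℝ (Fin d))
    (hv : ∀ i, ‖v i‖ = 1) (hinj : Function.Injective v)
    (m : ℝ) (hm : 0 < m)
    (hcov : ∀ x : EuclideanSpace ℝ (Fin d), ‖x‖ = 1 → ∃ i, m ≤ ⟪v i, x⟫) :
    (d : ℝ) * m ≤ 1 ∧ ((d : ℝ) * m = 1 → ∀ i j, i ≠ j → ⟪v i, v j⟫ = -m) := by
  classical
  -- Step 1 : 0 is in the convex hull of the v i
  have h0 : (0 : EuclideanSpace ℝ (Fin d)) ∈ convexHull ℝ (Set.range v) := by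
    by_contra h0
    have hfin : (Set.range v).Finite := Set.finite_range v
    have hcomp : IsCompact (convexHull ℝ (Set.range v)) := hfin.isCompact_convexHull ℝ
    obtain ⟨f, u, hfu, hub⟩ := geometric_hahn_banach_point_closed
      (convex_convexHull ℝ _) hcomp.isClosed h0
    have hf0 : f 0 = 0 := map_zero f
    set y := (InnerProductSpace.toDual ℝ (EuclideanSpace ℝ (Fin d))).symm f with hy
    have hyx : ∀ x, ⟪y, x⟫ = f x := fun x =>
      InnerProductSpace.toDual_symm_apply
    have hvy : ∀ i, u < ⟪y, v i⟫ := by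
      intro i
      rw [hyx]
      exact hub _ (subset_convexHull ℝ _ ⟨i, rfl⟩)
    have hu0 : 0 < u := by rw [← hf0]; exact hfu
    have hyne : y ≠ 0 := by
      intro h
      have := hvy 0
      rw [h, inner_zero_left] at this
      linarith
    have hxu : ‖(-(‖y‖⁻¹ • y) : EuclideanSpace ℝ (Fin d))‖ = 1 := by
      rw [norm_neg, norm_smul, norm_inv, norm_norm,
        inv_mul_cancel₀ (norm_ne_zero_iff.mpr hyne)]
    obtain ⟨i, hi⟩ := hcov _ hxu
    rw [inner_neg_right, real_inner_smul_right] at hi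
    have h1 : 0 < ⟪v i, y⟫ := by rw [real_inner_comm]; linarith [hvy i]
    have : (0:ℝ) < ‖y‖⁻¹ := by
      have := norm_pos_iff.mpr hyne; positivity
    nlinarith
  -- Step 2 : extract weights
  have hrange : Set.range v = ↑(Finset.univ.image v) := by
    simp
  rw [hrange, Finset.convexHull_eq] at h0
  obtain ⟨w, hw0, hw1, hwc⟩ := h0
  set lam : Fin (d+1) → ℝ := fun i => w (v i) with hlam
  have hinjon : ∀ x ∈ Finset.univ, ∀ y ∈ Finset.univ, v x = v y → x = y := by
    intro a _ b _ hab; exact hinj hab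
  have hlam0 : ∀ i, 0 ≤ lam i := fun i =>
    hw0 (v i) (Finset.mem_image_of_mem v (Finset.mem_univ i))
  have hlamsum : ∑ i, lam i = 1 := by
    rw [hlam, ← Finset.sum_image hinjon]
    exact hw1
  have hlamv : ∑ i, lam i • v i = 0 := by
    have := hwc
    rw [Finset.centerMass_eq_of_sum_1 _ id hw1] at this
    rw [Finset.sum_image hinjon] at this
    simpa [hlam] using this
  -- Step 3 : per-index points
  have hz : ∀ j, ∃ z : EuclideanSpace ℝ (Fin d), ‖z‖ ≤ 1 ∧ ⟪v j, z⟫ ≤ 0 ∧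
      ∀ i, i ≠ j → ⟪v i, z⟫ = m := fun j => exists_min_face d v m hm hcov j
  choose z hz1 hz2 hz3 using hz
  have hrel : ∀ j, lam j * ⟪v j, z j⟫ + (1 - lam j) * m = 0 := by
    intro j
    have h0 : ⟪∑ i, lam i • v i, z j⟫ = 0 := by rw [hlamv, inner_zero_left]
    rw [sum_inner] at h0
    have hsplit : ∑ i, ⟪lam i • v i, z j⟫
        = lam j * ⟪v j, z j⟫ + ∑ i ∈ Finset.univ.erase j, lam i * m := by
      rw [← Finset.add_sum_erase _ _ (Finset.mem_univ j)]
      congr 1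
      · rw [real_inner_smul_left]
      · apply Finset.sum_congr rfl
        intro i hi
        rw [real_inner_smul_left, hz3 j i (Finset.ne_of_mem_erase hi)]
    have hsum_erase : ∑ i ∈ Finset.univ.erase j, lam i = 1 - lam j := by
      have := Finset.add_sum_erase Finset.univ lam (Finset.mem_univ j)
      rw [hlamsum] at this
      linarith
    rw [hsplit] at h0
    rw [← Finset.sum_mul, hsum_erase] at h0
    linarith
  have hbound : ∀ j, -1 ≤ ⟪v j, z j⟫ := by
    intro j
    have h1 : |⟪v j, z j⟫| ≤ ‖v j‖ * ‖z j‖ := abs_real_inner_le_norm _ _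
    rw [hv j, one_mul] at h1
    have := abs_le.mp (le_trans h1 (hz1 j))
    linarith [this.1]
  have hineq : ∀ j, (1 - lam j) * m ≤ lam j := by
    intro j
    have h1 := hrel j
    nlinarith [hlam0 j, hbound j]
  constructor
  · have hsum : ∑ j, ((1 - lam j) * m) ≤ ∑ j, lam j :=
      Finset.sum_le_sum fun j _ => hineq j
    rw [hlamsum] at hsum
    have : ∑ j : Fin (d+1), ((1 - lam j) * m) = ((d+1 : ℝ) - 1) * m := by
      rw [← Finset.sum_mul]
      congr 1
      rw [Finset.sum_sub_distrib, hlamsum]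
      simp
    rw [this] at hsum
    linarith
  · intro heq i j hij
    have hzero : ∀ k, lam k - (1 - lam k) * m = 0 := by
      have hs : ∑ k, (lam k - (1 - lam k) * m) = 0 := by
        rw [Finset.sum_sub_distrib, hlamsum, ← Finset.sum_mul, Finset.sum_sub_distrib, hlamsum]
        simp only [Finset.sum_const, Finset.card_univ, Fintype.card_fin, nsmul_eq_mul]
        push_cast
        linarith
      have := (Finset.sum_eq_zero_iff_of_nonneg
        (fun k _ => by linarith [hineq k])).mp hs
      intro k; exact this k (Finset.mem_univ k)
    have hlampos : ∀ k, 0 < lam k := by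
      intro k
      rcases (hlam0 k).lt_or_eq with h | h
      · exact h
      · exfalso
        have h1 := hzero k
        rw [← h] at h1
        norm_num at h1
        linarith
    have hvk : ∀ k, v k = -(z k) := by
      intro k
      have h1 : lam k * ⟪v k, z k⟫ = -(lam k) := by
        have ha := hrel k
        have hb := hzero k
        linarith
      have h2 : ⟪v k, z k⟫ = -1 := by
        apply mul_left_cancel₀ (hlampos k).ne'
        rw [h1]; ring
      have h3 : ⟪v k, -(z k)⟫ = 1 := by rw [inner_neg_right, h2]; ring
      have h4 : ‖z k‖ = 1 := by
        have h5 : |⟪v k, -(z k)⟫| ≤ ‖v k‖ * ‖-(z k)‖ := abs_real_inner_le_norm _ _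
        rw [h3, hv k, one_mul, norm_neg, abs_one] at h5
        exact le_antisymm (hz1 k) h5
      exact (inner_eq_one_iff_of_norm_eq_one (hv k) (by rw [norm_neg]; exact h4)).mp h3
    have : ⟪v i, v j⟫ = -⟪v i, z j⟫ := by
      rw [hvk j, inner_neg_right]
    rw [this, hz3 j i hij]

lemma regular_cov (d : ℕ) (hd : 2 ≤ d) (v : Fin (d+1) → EuclideanSpace ℝ (Fin d))
    (hv : ∀ i, ‖v i‖ = 1) (hg : ∀ i j, i ≠ j → ⟪v i, v j⟫ = -1/(d:ℝ)) :
    ∀ x : EuclideanSpace ℝ (Fin d), ‖x‖ = 1 → ∃ i, 1/(d:ℝ) ≤ ⟪v i, x⟫ := by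
  classical
  have hdR : (0:ℝ) < d := by positivity
  have hG : ∀ i j, ⟪v i, v j⟫ = if i = j then 1 else -1/(d:ℝ) := by
    intro i j
    split_ifs with h
    · subst h
      rw [real_inner_self_eq_norm_sq, hv i]; norm_num
    · exact hg i j h
  set w : Fin d → EuclideanSpace ℝ (Fin d) :=
    fun i => v i.castSucc - v (Fin.last d) with hw
  have hne : Nonempty (Fin d) := ⟨⟨0, by omega⟩⟩
  have hinner_w : ∀ (i : Fin (d+1)) (k : Fin d),
      ⟪v i, w k⟫ = (if i = k.castSucc then 1 else -1/(d:ℝ)) - (if i = Fin.last d then 1 else -1/(d:ℝ)) := by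
    intro i k
    rw [hw]
    simp only [inner_sub_right]
    rw [hG i k.castSucc, hG i (Fin.last d)]
  have hindep : LinearIndependent ℝ w := by
    rw [Fintype.linearIndependent_iff]
    intro g hg0 i
    have h0 : ⟪v i.castSucc, ∑ k, g k • w k⟫ = 0 := by rw [hg0, inner_zero_right]
    rw [inner_sum] at h0
    have hterm : ∀ k : Fin d, ⟪v i.castSucc, g k • w k⟫
        = g k * (if i = k then 1 + 1/(d:ℝ) else 0) := by
      intro k
      rw [real_inner_smul_right, hinner_w, if_neg ((Fin.castSucc_lt_last i).ne)]
      by_cases h : i = k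
      · rw [if_pos (by rw [h]), if_pos h]; ring
      · rw [if_neg (fun hc => h (Fin.castSucc_inj.mp hc)), if_neg h]; ring
    rw [Finset.sum_congr rfl (fun k _ => hterm k)] at h0
    rw [Finset.sum_eq_single i (fun k _ hk => by rw [if_neg (Ne.symm hk), mul_zero])
      (fun h => absurd (Finset.mem_univ i) h)] at h0
    rw [if_pos rfl] at h0
    have : (1 : ℝ) + 1/(d:ℝ) > 0 := by positivity
    rcases mul_eq_zero.mp h0 with h | h
    · exact h
    · linarith
  have hspan : Submodule.span ℝ (Set.range w) = ⊤ :=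
    hindep.span_eq_top_of_card_eq_finrank (by simp [finrank_euclideanSpace_fin])
  intro x hx
  obtain ⟨b, hb⟩ := (Submodule.mem_span_range_iff_exists_fun ℝ).mp
    (hspan ▸ Submodule.mem_top : x ∈ Submodule.span ℝ (Set.range w))
  -- coefficients a over Fin (d+1)
  set a : Fin (d+1) → ℝ := fun i =>
    if h : i = Fin.last d then -∑ k, b k else b (i.castPred h) with ha
  have h1 : ∀ i : Fin d, a i.castSucc = b i := by
    intro i
    simp only [ha]
    rw [dif_neg ((Fin.castSucc_lt_last i).ne)]
    congr 1
  have h2 : a (Fin.last d) = -∑ k, b k := by simp [ha]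
  have hxa : ∑ i, a i • v i = x := by
    rw [← hb, Fin.sum_univ_castSucc]
    have hcongr : (∑ i : Fin d, a i.castSucc • v i.castSucc)
        = ∑ i : Fin d, b i • v i.castSucc :=
      Finset.sum_congr rfl fun i _ => by rw [h1 i]
    rw [hcongr, h2]
    have hr : ∀ k : Fin d, b k • (v k.castSucc - v (Fin.last d))
        = b k • v k.castSucc - b k • v (Fin.last d) := fun k => smul_sub _ _ _
    rw [Finset.sum_congr rfl fun k _ => hr k, Finset.sum_sub_distrib, ← Finset.sum_smul, neg_smul]
    abel
  have hasum : ∑ i, a i = 0 := by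
    rw [Fin.sum_univ_castSucc, h2, Finset.sum_congr rfl fun (i : Fin d) _ => h1 i]
    ring
  set c : Fin (d+1) → ℝ := fun i => ⟪v i, x⟫ with hc
  have hca : ∀ i, c i = (1 + 1/(d:ℝ)) * a i := by
    intro i
    simp only [hc]
    rw [← hxa, inner_sum]
    have hterm : ∀ k, ⟪v i, a k • v k⟫ = a k * ((if i = k then 1 + 1/(d:ℝ) else 0) - 1/(d:ℝ)) := by
      intro k
      rw [real_inner_smul_right, hG]
      congr 1
      by_cases h : i = k
      · rw [if_pos h, if_pos h]; ring
      · rw [if_neg h, if_neg h]; ring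
    rw [Finset.sum_congr rfl fun k _ => hterm k]
    have : ∀ k, a k * ((if i = k then 1 + 1/(d:ℝ) else 0) - 1/(d:ℝ))
        = a k * (if i = k then 1 + 1/(d:ℝ) else 0) - a k * (1/(d:ℝ)) := fun k => by ring
    rw [Finset.sum_congr rfl fun k _ => this k, Finset.sum_sub_distrib]
    rw [Finset.sum_eq_single i (fun k _ hk => by rw [if_neg (Ne.symm hk), mul_zero])
      (fun h => absurd (Finset.mem_univ i) h)]
    rw [if_pos rfl, ← Finset.sum_mul, hasum]
    ring
  have hcsum : ∑ i, c i = 0 := by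
    rw [Finset.sum_congr rfl fun i _ => hca i, ← Finset.mul_sum, hasum, mul_zero]
  have hnorm1 : ∑ i, a i * c i = 1 := by
    have : ⟪x, x⟫ = 1 := by
      rw [real_inner_self_eq_norm_sq, hx]; norm_num
    rw [← this]
    nth_rewrite 1 [← hxa]
    rw [sum_inner]
    exact Finset.sum_congr rfl fun i _ => by rw [real_inner_smul_left]
  have hcsq : ∑ i, c i ^ 2 = 1 + 1/(d:ℝ) := by
    have : ∀ i, c i ^ 2 = (1 + 1/(d:ℝ)) * (a i * c i) := by
      intro i; rw [pow_two]; nth_rewrite 1 [hca i]; ring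
    rw [Finset.sum_congr rfl fun i _ => this i, ← Finset.mul_sum, hnorm1, mul_one]
  -- conclusion
  by_contra hcon
  push_neg at hcon
  have hlt : ∀ i, c i < 1/(d:ℝ) := fun i => hcon i
  have hge : ∀ i, -1 ≤ c i := by
    intro i
    have h1 : |⟪v i, x⟫| ≤ ‖v i‖ * ‖x‖ := abs_real_inner_le_norm _ _
    rw [hv i, hx, one_mul] at h1
    have := (abs_le.mp h1).1
    simpa [hc] using this
  have hterm_nonneg : ∀ i, 0 ≤ (1/(d:ℝ) - c i) * (c i + 1) := by
    intro i
    apply mul_nonneg (by linarith [hlt i]) (by linarith [hge i])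
  have hsum_eq : ∑ i, (1/(d:ℝ) - c i) * (c i + 1) = 0 := by
    have expand : ∀ i, (1/(d:ℝ) - c i) * (c i + 1)
        = (1/(d:ℝ)) * c i + 1/(d:ℝ) - c i ^ 2 - c i := fun i => by ring
    rw [Finset.sum_congr rfl fun i _ => expand i]
    have hsplit : ∑ i, ((1/(d:ℝ)) * c i + 1/(d:ℝ) - c i ^ 2 - c i)
        = (1/(d:ℝ)) * (∑ i, c i) + ((d:ℝ)+1) * (1/(d:ℝ)) - (∑ i, c i ^ 2) - ∑ i, c i := by
      rw [Finset.sum_sub_distrib, Finset.sum_sub_distrib, Finset.sum_add_distrib,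
        ← Finset.mul_sum, Finset.sum_const, Finset.card_univ, Fintype.card_fin, nsmul_eq_mul]
      push_cast; ring
    rw [hsplit, hcsum, hcsq]
    field_simp
    ring
  have hall : ∀ i, (1/(d:ℝ) - c i) * (c i + 1) = 0 := by
    intro i
    have := (Finset.sum_eq_zero_iff_of_nonneg (fun i _ => hterm_nonneg i)).mp hsum_eq
    exact this i (Finset.mem_univ i)
  have hcm1 : ∀ i, c i = -1 := by
    intro i
    rcases mul_eq_zero.mp (hall i) with h | h
    · exfalso; linarith [hlt i]
    · linarith
  have hfin : (0:ℝ) = ((d:ℝ)+1) * (-1) := by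
    rw [← hcsum, Finset.sum_congr rfl fun i _ => hcm1 i, Finset.sum_const, Finset.card_univ,
      Fintype.card_fin, nsmul_eq_mul]
    push_cast; ring
  linarith

lemma exists_regular_simplex (d : ℕ) (hd : 2 ≤ d) :
    ∃ v : Fin (d+1) → EuclideanSpace ℝ (Fin d),
      (∀ i, ‖v i‖ = 1) ∧ (∀ i j, i ≠ j → ⟪v i, v j⟫ = -1/(d:ℝ)) := by
  classical
  have hdR : (0:ℝ) < d := by positivity
  set F := EuclideanSpace ℝ (Fin (d+1)) with hF
  set one : F := (WithLp.equiv 2 _).symm (fun _ => (1:ℝ)) with hone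
  set w : Fin (d+1) → F := fun i =>
    (WithLp.equiv 2 _).symm (fun k => (if k = i then 1 else 0) - 1/((d:ℝ)+1)) with hw
  have happly : ∀ (i : Fin (d+1)) (k : Fin (d+1)),
      w i k = (if k = i then 1 else 0) - 1/((d:ℝ)+1) := by
    intro i k; rw [hw]; rfl
  have hone_apply : ∀ k : Fin (d+1), one k = 1 := fun k => rfl
  have hinner : ∀ i j, ⟪w i, w j⟫ = (if i = j then 1 else 0) - 1/((d:ℝ)+1) := by
    intro i j
    rw [PiLp.inner_apply]
    simp only [RCLike.inner_apply, conj_trivial]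
    have hterm : ∀ k, w i k * w j k
        = (if k = i then 1 else 0) * (if k = j then 1 else 0)
          - (1/((d:ℝ)+1)) * (if k = i then 1 else 0)
          - (1/((d:ℝ)+1)) * (if k = j then 1 else 0) + (1/((d:ℝ)+1))^2 := by
      intro k; rw [happly, happly]; ring
    rw [Finset.sum_congr rfl fun k _ => (mul_comm _ _).trans (hterm k)]
    rw [Finset.sum_add_distrib, Finset.sum_sub_distrib, Finset.sum_sub_distrib]
    rw [← Finset.mul_sum, ← Finset.mul_sum]
    have hs1 : ∑ k, (if k = i then (1:ℝ) else 0) = 1 := by simp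
    have hs2 : ∑ k, (if k = j then (1:ℝ) else 0) = 1 := by simp
    have hs3 : ∑ k : Fin (d+1), ((if k = i then (1:ℝ) else 0) * (if k = j then 1 else 0))
        = if i = j then 1 else 0 := by
      rcases eq_or_ne i j with h | h
      · subst h; simp
      · rw [if_neg h]
        apply Finset.sum_eq_zero
        intro k _
        by_cases h2 : k = i
        · subst h2; simp [h]
        · simp [h2]
    rw [hs1, hs2, hs3]
    rw [Finset.sum_const, Finset.card_univ, Fintype.card_fin, nsmul_eq_mul]
    have : ((d:ℝ)+1) ≠ 0 := by positivity
    push_cast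
    field_simp
    ring
  have hsum0 : ∀ i, ⟪one, w i⟫ = 0 := by
    intro i
    rw [PiLp.inner_apply]
    simp only [RCLike.inner_apply, conj_trivial]
    have : ∀ k, one k * w i k = (if k = i then 1 else 0) - 1/((d:ℝ)+1) := by
      intro k; rw [hone_apply, happly]; ring
    rw [Finset.sum_congr rfl fun k _ => (mul_comm _ _).trans (this k), Finset.sum_sub_distrib]
    simp [Finset.card_univ]
    field_simp
    ring
  -- the hyperplane
  set H : Submodule ℝ F := (Submodule.span ℝ {one})ᗮ with hH
  have honene : one ≠ 0 := by
    intro h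
    have := congrFun (congrArg (WithLp.equiv 2 _) h) 0
    simp [hone] at this
  have hrank : Module.finrank ℝ H = d := by
    have h1 := Submodule.finrank_add_finrank_orthogonal (Submodule.span ℝ {one} : Submodule ℝ F)
    rw [finrank_span_singleton honene, finrank_euclideanSpace_fin, ← hH] at h1
    omega
  have hmem : ∀ i, w i ∈ H := by
    intro i
    rw [hH]
    intro u hu
    obtain ⟨c, rfl⟩ := Submodule.mem_span_singleton.mp hu
    rw [real_inner_smul_left, hsum0 i, mul_zero]
  haveI : FiniteDimensional ℝ H := inferInstance
  set B : OrthonormalBasis (Fin d) ℝ H :=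
    (stdOrthonormalBasis ℝ H).reindex (finCongr hrank) with hB
  set s : ℝ := Real.sqrt (((d:ℝ)+1)/d) with hs
  have hs2 : s^2 = ((d:ℝ)+1)/d := Real.sq_sqrt (by positivity)
  set v : Fin (d+1) → EuclideanSpace ℝ (Fin d) :=
    fun i => B.repr ⟨s • w i, Submodule.smul_mem _ _ (hmem i)⟩ with hv
  have hinner_v : ∀ i j, ⟪v i, v j⟫ = s^2 * ⟪w i, w j⟫ := by
    intro i j
    rw [hv, B.repr.inner_map_map, Submodule.coe_inner, real_inner_smul_left,
      real_inner_smul_right]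
    ring
  refine ⟨v, ?_, ?_⟩
  · intro i
    have hsq : ‖v i‖^2 = 1 := by
      rw [← real_inner_self_eq_norm_sq, hinner_v, hinner, if_pos rfl, hs2]
      field_simp
      ring
    calc ‖v i‖ = Real.sqrt (‖v i‖^2) := (Real.sqrt_sq (norm_nonneg _)).symm
    _ = 1 := by rw [hsq, Real.sqrt_one]
  · intro i j hij
    rw [hinner_v, hinner, if_neg hij, hs2]
    have h1 : ((d:ℝ)+1) ≠ 0 := by positivity
    have h2 : (d:ℝ) ≠ 0 := by positivity
    field_simp
    ring

lemma inf_dist_eq (d : ℕ) (v : Fin (d+1) → EuclideanSpace ℝ (Fin d))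
    (hv : ∀ i, ‖v i‖ = 1) (x : EuclideanSpace ℝ (Fin d)) (hx : ‖x‖ = 1) :
    (⨅ i, dist x (v i)) =
      Real.sqrt (2 - 2 * (Finset.univ.sup' Finset.univ_nonempty (fun i => ⟪v i, x⟫))) := by
  have hdist : ∀ i, dist x (v i) = Real.sqrt (2 - 2 * ⟪v i, x⟫) := by
    intro i
    rw [dist_eq_norm, ← Real.sqrt_sq (norm_nonneg (x - v i)), norm_sub_sq_real, hx, hv i,
      real_inner_comm]
    congr 1
    ring
  apply le_antisymm
  · obtain ⟨i0, -, hi0⟩ := Finset.exists_mem_eq_sup' Finset.univ_nonempty (fun i => ⟪v i, x⟫)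
    have h1 : dist x (v i0)
        = Real.sqrt (2 - 2 * (Finset.univ.sup' Finset.univ_nonempty (fun i => ⟪v i, x⟫))) := by
      rw [hdist, ← hi0]
    rw [← h1]
    exact ciInf_le (Finite.bddBelow_range _) i0
  · apply le_ciInf
    intro i
    rw [hdist i]
    apply Real.sqrt_le_sqrt
    have := Finset.le_sup' (fun i => ⟪v i, x⟫) (Finset.mem_univ i)
    linarith

lemma sup_formula (d : ℕ) (hd : 2 ≤ d) (v : Fin (d+1) → EuclideanSpace ℝ (Fin d))
    (hv : ∀ i, ‖v i‖ = 1) :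
    ∃ m : ℝ, (∀ x : EuclideanSpace ℝ (Fin d), ‖x‖ = 1 → ∃ i, m ≤ ⟪v i, x⟫) ∧
      (∃ x : EuclideanSpace ℝ (Fin d), ‖x‖ = 1 ∧ ∀ i, ⟪v i, x⟫ ≤ m) ∧
      (⨆ x : sphere (0 : EuclideanSpace ℝ (Fin d)) 1,
          ⨅ i, dist (x : EuclideanSpace ℝ (Fin d)) (v i)) = Real.sqrt (2 - 2 * m) := by
  classical
  haveI : Nonempty (Fin d) := ⟨⟨0, by omega⟩⟩
  have hsne : (sphere (0 : EuclideanSpace ℝ (Fin d)) 1).Nonempty :=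
    NormedSpace.sphere_nonempty.mpr zero_le_one
  haveI : Nonempty (sphere (0 : EuclideanSpace ℝ (Fin d)) 1) := hsne.to_subtype
  set g : EuclideanSpace ℝ (Fin d) → ℝ :=
    fun x => Finset.univ.sup' Finset.univ_nonempty (fun i => ⟪v i, x⟫) with hg
  have hgc : Continuous g :=
    Continuous.finset_sup'_apply _ (fun i _ => Continuous.inner continuous_const continuous_id)
  obtain ⟨x0, hx0mem, hx0min⟩ :=
    (isCompact_sphere (0 : EuclideanSpace ℝ (Fin d)) 1).exists_isMinOn hsne hgc.continuousOn
  set m := g x0 with hm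
  have hx0 : ‖x0‖ = 1 := by rwa [mem_sphere, dist_zero_right] at hx0mem
  have hnorm : ∀ y : sphere (0 : EuclideanSpace ℝ (Fin d)) 1, ‖(y : EuclideanSpace ℝ (Fin d))‖ = 1 := by
    intro y
    have := y.2
    rwa [mem_sphere, dist_zero_right] at this
  have hmin : ∀ x : EuclideanSpace ℝ (Fin d), ‖x‖ = 1 → m ≤ g x := by
    intro x hx
    exact hx0min (by rwa [mem_sphere, dist_zero_right])
  have hub : ∀ y : sphere (0 : EuclideanSpace ℝ (Fin d)) 1,
      (⨅ i, dist (y : EuclideanSpace ℝ (Fin d)) (v i)) ≤ Real.sqrt (2 - 2 * m) := by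
    intro y
    rw [inf_dist_eq d v hv _ (hnorm y)]
    apply Real.sqrt_le_sqrt
    have := hmin _ (hnorm y)
    rw [hg] at this
    linarith
  refine ⟨m, ?_, ⟨x0, hx0, ?_⟩, ?_⟩
  · intro x hx
    obtain ⟨i0, -, hi0⟩ := Finset.exists_mem_eq_sup' Finset.univ_nonempty (fun i => ⟪v i, x⟫)
    exact ⟨i0, by rw [← hi0]; exact hmin x hx⟩
  · intro i
    exact Finset.le_sup' (fun i => ⟪v i, x0⟫) (Finset.mem_univ i)
  · apply le_antisymm
    · exact ciSup_le hub
    · have h1 : (⨅ i, dist (x0 : EuclideanSpace ℝ (Fin d)) (v i)) = Real.sqrt (2 - 2 * m) :=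
        inf_dist_eq d v hv x0 hx0
      rw [← h1]
      exact le_ciSup ⟨Real.sqrt (2 - 2 * m), by rintro r ⟨y, rfl⟩; exact hub y⟩
        (⟨x0, hx0mem⟩ : sphere (0 : EuclideanSpace ℝ (Fin d)) 1)

lemma main1 (d : ℕ) (hd : 2 ≤ d) (v : Fin (d+1) → EuclideanSpace ℝ (Fin d))
    (hv : ∀ i, ‖v i‖ = 1) (hinj : Function.Injective v) :
    Real.sqrt (2 - 2/(d:ℝ)) ≤
      (⨆ x : sphere (0 : EuclideanSpace ℝ (Fin d)) 1,
        ⨅ i, dist (x : EuclideanSpace ℝ (Fin d)) (v i)) ∧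
    ((⨆ x : sphere (0 : EuclideanSpace ℝ (Fin d)) 1,
        ⨅ i, dist (x : EuclideanSpace ℝ (Fin d)) (v i)) = Real.sqrt (2 - 2/(d:ℝ)) ↔
      ∀ i j, i ≠ j → ⟪v i, v j⟫ = -1/(d:ℝ)) := by
  obtain ⟨m, hcov, ⟨x0, hx0, hx0le⟩, hS⟩ := sup_formula d hd v hv
  have hdR : (0:ℝ) < d := by positivity
  have hd1 : 2/(d:ℝ) ≤ 1 := by
    rw [div_le_one hdR]
    exact_mod_cast hd
  have hmle : m ≤ 1/(d:ℝ) := by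
    rcases le_or_gt m 0 with h | h
    · linarith [one_div_pos.mpr hdR]
    · have h1 := (key_main d v hv hinj m h hcov).1
      rw [le_div_iff₀ hdR]
      linarith
  constructor
  · rw [hS]
    apply Real.sqrt_le_sqrt
    rw [div_eq_mul_one_div 2 (d:ℝ)]
    linarith
  · rw [hS]
    constructor
    · intro h
      have hnn1 : 0 ≤ 2 - 2*m := by
        have : 2*m ≤ 2*(1/(d:ℝ)) := by linarith
        rw [mul_one_div] at this
        linarith
      have hnn2 : 0 ≤ 2 - 2/(d:ℝ) := by linarith
      have h1 : 2 - 2*m = 2 - 2/(d:ℝ) := (Real.sqrt_inj hnn1 hnn2).mp h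
      have hmeq : m = 1/(d:ℝ) := by
        have : 2*m = 2/(d:ℝ) := by linarith
        rw [div_eq_mul_one_div 2 (d:ℝ)] at this
        linarith
      have hmpos : 0 < m := by rw [hmeq]; positivity
      have hdm : (d:ℝ) * m = 1 := by rw [hmeq]; field_simp
      have hreg := (key_main d v hv hinj m hmpos hcov).2 hdm
      intro i j hij
      rw [hreg i j hij, hmeq]
      ring
    · intro hreg
      have hcov' := regular_cov d hd v hv hreg
      have hge : 1/(d:ℝ) ≤ m := by
        obtain ⟨i, hi⟩ := hcov' x0 hx0
        exact le_trans hi (hx0le i)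
      have hmeq : m = 1/(d:ℝ) := le_antisymm hmle hge
      rw [hmeq]
      congr 1
      ring

theorem stmt_10 (d : ℕ) (hd : 2 ≤ d) :
    (∀ v : Fin (d+1) → EuclideanSpace ℝ (Fin d), (∀ i, ‖v i‖ = 1) →
      Function.Injective v →
      (Real.sqrt (2 - 2/(d:ℝ)) ≤
        ⨆ x : Metric.sphere (0 : EuclideanSpace ℝ (Fin d)) 1,
          ⨅ i, dist (x : EuclideanSpace ℝ (Fin d)) (v i)) ∧
      ((⨆ x : Metric.sphere (0 : EuclideanSpace ℝ (Fin d)) 1,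
          ⨅ i, dist (x : EuclideanSpace ℝ (Fin d)) (v i)) = Real.sqrt (2 - 2/(d:ℝ)) ↔
        ∀ i j, i ≠ j → (inner ℝ (v i) (v j) : ℝ) = -1/(d:ℝ))) ∧
    (⨅ v : {v : Fin (d+1) → EuclideanSpace ℝ (Fin d) //
        (∀ i, ‖v i‖ = 1) ∧ Function.Injective v},
      ⨆ x : Metric.sphere (0 : EuclideanSpace ℝ (Fin d)) 1,
        ⨅ i, dist (x : EuclideanSpace ℝ (Fin d)) ((v : Fin (d+1) → EuclideanSpace ℝ (Fin d)) i))
      = Real.sqrt (2 - 2/(d:ℝ)) := by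
  refine ⟨fun v hv hinj => main1 d hd v hv hinj, ?_⟩
  obtain ⟨vs, hvs, hgs⟩ := exists_regular_simplex d hd
  have hdR : (0:ℝ) < d := by positivity
  have hinjs : Function.Injective vs := by
    intro i j hij
    by_contra hne
    have h1 := hgs i j hne
    rw [hij, real_inner_self_eq_norm_sq, hvs j] at h1
    have h2 : (0:ℝ) < 1/(d:ℝ) := by positivity
    rw [neg_div] at h1
    norm_num at h1
    have h3 : (0:ℝ) < (d:ℝ)⁻¹ := by positivity
    linarith
  haveI : Nonempty {v : Fin (d+1) → EuclideanSpace ℝ (Fin d) //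
      (∀ i, ‖v i‖ = 1) ∧ Function.Injective v} := ⟨⟨vs, hvs, hinjs⟩⟩
  apply le_antisymm
  · have hval : (⨆ x : Metric.sphere (0 : EuclideanSpace ℝ (Fin d)) 1,
        ⨅ i, dist (x : EuclideanSpace ℝ (Fin d)) (vs i)) = Real.sqrt (2 - 2/(d:ℝ)) :=
      (main1 d hd vs hvs hinjs).2.mpr hgs
    have := ciInf_le (f := fun v : {v : Fin (d+1) → EuclideanSpace ℝ (Fin d) //
        (∀ i, ‖v i‖ = 1) ∧ Function.Injective v} =>
      ⨆ x : Metric.sphere (0 : EuclideanSpace ℝ (Fin d)) 1,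
        ⨅ i, dist (x : EuclideanSpace ℝ (Fin d)) ((v : Fin (d+1) → EuclideanSpace ℝ (Fin d)) i))
      ⟨Real.sqrt (2 - 2/(d:ℝ)), by
        rintro r ⟨cfg, rfl⟩
        exact (main1 d hd cfg.1 cfg.2.1 cfg.2.2).1⟩ ⟨vs, hvs, hinjs⟩
    rwa [hval] at this
  · exact le_ciInf fun cfg => (main1 d hd cfg.1 cfg.2.1 cfg.2.2).1
end

section
/- Let d ≥ 2 and f : [0,4] → (-∞,∞] be continuous on (0,4], differentiable on (0,4) with f' concave on (0,4), and lim_{t→0⁺} f(t) = f(0). Let ω* = {x_0,...,x_d} be the vertices of a regular d-simplex inscribed in S^{d-1}. Then for every x ∈ S^{d-1}, ∑_{i=0}^d f(|x - x_i|²) ≥ f(4) + d·f(2 - 2/d), and equality holds at each point of -ω* = {-x_0,...,-x_d}. Consequently min_{x ∈ S^{d-1}} ∑_i f(|x - x_i|²) = f(4) + d·f(2 - 2/d). -/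
open Set

lemma combo_eq {s r t : ℝ} (hrt : t < r) :
    ((r - s)/(r - t)) • t + ((s - t)/(r - t)) • r = s := by
  have h : (0:ℝ) < r - t := by linarith
  simp only [smul_eq_mul]
  field_simp
  ring

lemma concave_sign_left {g : ℝ → ℝ} {s r t : ℝ} (hconc : ConcaveOn ℝ (Set.Ioo (0:ℝ) 4) g)
    (hs : s ∈ Set.Ioo (0:ℝ) 4) (hr : r ∈ Set.Ioo (0:ℝ) 4) (hsr : s < r)
    (hgs : g s = 0) (hgr : g r = 0) (ht : t ∈ Set.Ioo (0:ℝ) 4) (hts : t < s) :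
    g t ≤ 0 := by
  have htr : t < r := hts.trans hsr
  have hrt : (0:ℝ) < r - t := by linarith
  have ha : 0 < (r - s)/(r - t) := div_pos (by linarith) hrt
  have hb : 0 < (s - t)/(r - t) := div_pos (by linarith) hrt
  have hab : (r - s)/(r - t) + (s - t)/(r - t) = 1 := by
    rw [← add_div, show r - s + (s - t) = r - t by ring]
    exact div_self hrt.ne'
  have hcomb := combo_eq (s := s) htr
  have h2 := hconc.2 ht hr ha.le hb.le hab
  rw [hcomb, hgs, hgr] at h2
  simp only [smul_eq_mul, mul_zero, add_zero] at h2
  nlinarith [h2, ha]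

lemma concave_sign_right {g : ℝ → ℝ} {s r t : ℝ} (hconc : ConcaveOn ℝ (Set.Ioo (0:ℝ) 4) g)
    (hs : s ∈ Set.Ioo (0:ℝ) 4) (hr : r ∈ Set.Ioo (0:ℝ) 4) (hsr : s < r)
    (hgs : g s = 0) (hgr : g r = 0) (ht : t ∈ Set.Ioo (0:ℝ) 4) (hts : r < t) :
    g t ≤ 0 := by
  have hst : s < t := hsr.trans hts
  have hts' : (0:ℝ) < t - s := by linarith
  have ha : 0 < (t - r)/(t - s) := div_pos (by linarith) hts'
  have hb : 0 < (r - s)/(t - s) := div_pos (by linarith) hts'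
  have hab : (t - r)/(t - s) + (r - s)/(t - s) = 1 := by
    rw [← add_div, show t - r + (r - s) = t - s by ring]
    exact div_self hts'.ne'
  have hcomb : ((t - r)/(t - s)) • s + ((r - s)/(t - s)) • t = r := by
    simp only [smul_eq_mul]; field_simp; ring
  have h2 := hconc.2 hs ht ha.le hb.le hab
  rw [hcomb, hgs, hgr] at h2
  simp only [smul_eq_mul, mul_zero, zero_add] at h2
  nlinarith [h2, hb]

lemma concave_sign_mid {g : ℝ → ℝ} {s r t : ℝ} (hconc : ConcaveOn ℝ (Set.Ioo (0:ℝ) 4) g)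
    (hs : s ∈ Set.Ioo (0:ℝ) 4) (hr : r ∈ Set.Ioo (0:ℝ) 4) (hsr : s < r)
    (hgs : g s = 0) (hgr : g r = 0) (hts : s < t) (htr : t < r) :
    0 ≤ g t := by
  have hrs : (0:ℝ) < r - s := by linarith
  have ha : 0 ≤ (r - t)/(r - s) := le_of_lt (div_pos (by linarith) hrs)
  have hb : 0 ≤ (t - s)/(r - s) := le_of_lt (div_pos (by linarith) hrs)
  have hab : (r - t)/(r - s) + (t - s)/(r - s) = 1 := by
    rw [← add_div, show r - t + (t - s) = r - s by ring]
    exact div_self hrs.ne'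
  have hcomb : ((r - t)/(r - s)) • s + ((t - s)/(r - s)) • r = t := by
    simp only [smul_eq_mul]; field_simp; ring
  have h2 := hconc.2 hs hr ha hb hab
  rw [hcomb, hgs, hgr] at h2
  simp only [smul_eq_mul, mul_zero, add_zero] at h2
  linarith

lemma key_real (F g : ℝ → ℝ) (s : ℝ) (hs0 : 0 < s) (hs4 : s < 4)
    (hFc : ContinuousOn F (Set.Ioc 0 4))
    (hF' : ∀ t ∈ Set.Ioo (0:ℝ) 4, HasDerivAt F (g t) t)
    (hconc : ConcaveOn ℝ (Set.Ioo (0:ℝ) 4) g) :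
    ∀ t ∈ Set.Ioc (0:ℝ) 4,
      F s + g s * (t - s) + ((F 4 - F s - g s * (4 - s))/(4-s)^2) * (t-s)^2 ≤ F t := by
  have h4s : (0:ℝ) < 4 - s := by linarith
  set C : ℝ := (F 4 - F s - g s * (4 - s))/(4-s)^2 with hC_def
  set q : ℝ → ℝ := fun t => F s + (g s * (t - s) + C * (t-s)^2) with hq_def
  have hq4 : q 4 = F 4 := by
    rw [hq_def]
    simp only [hC_def]
    field_simp
    ring
  have hqs : q s = F s := by simp [hq_def]
  set G : ℝ → ℝ := fun t => F t - q t with hG_def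
  set G' : ℝ → ℝ := fun t => g t - (g s + C * (2*(t - s))) with hG'_def
  have hGd : ∀ t ∈ Set.Ioo (0:ℝ) 4, HasDerivAt G (G' t) t := by
    intro t ht
    have h1 : HasDerivAt (fun u : ℝ => u - s) 1 t := (hasDerivAt_id t).sub_const s
    have h2 : HasDerivAt (fun u : ℝ => (u - s)^2) (2*(t-s)) t := by
      simpa using h1.fun_pow 2
    have hq' : HasDerivAt q (g s + C * (2*(t-s))) t := by
      rw [hq_def]
      simpa using ((h1.const_mul (g s)).add (h2.const_mul C)).const_add (F s)
    exact (hF' t ht).sub hq'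
  have hqc : Continuous q := by rw [hq_def]; fun_prop
  have hGc : ContinuousOn G (Set.Ioc 0 4) := hFc.sub hqc.continuousOn
  have hGs : G s = 0 := by simp [hG_def, hqs]
  have hG4 : G 4 = 0 := by simp [hG_def, hq4]
  have hG's : G' s = 0 := by simp [hG'_def]
  have hG'conc : ConcaveOn ℝ (Set.Ioo (0:ℝ) 4) G' := by
    refine ⟨convex_Ioo _ _, ?_⟩
    intro u hu v hv a b ha hb hab
    have h3 := hconc.2 hu hv ha hb hab
    simp only [hG'_def, smul_eq_mul] at *
    have hE : a*(g s + C*(2*(u-s))) + b*(g s + C*(2*(v-s)))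
        = g s + C*(2*(a*u+b*v-s)) := by
      have hb1 : b = 1 - a := by linarith
      rw [hb1]; ring
    linarith [h3, hE]
  obtain ⟨r, hr, hG'r⟩ : ∃ r ∈ Set.Ioo s 4, G' r = 0 := by
    apply exists_hasDerivAt_eq_zero hs4 (hGc.mono ?_) (by rw [hGs, hG4])
    · intro u hu
      exact hGd u ⟨hs0.trans hu.1, hu.2⟩
    · intro u hu
      exact ⟨hs0.trans_le hu.1, hu.2⟩
  have hsmem : s ∈ Set.Ioo (0:ℝ) 4 := ⟨hs0, hs4⟩
  have hrmem : r ∈ Set.Ioo (0:ℝ) 4 := ⟨hs0.trans hr.1, hr.2⟩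
  intro t ht
  suffices h : 0 ≤ G t by
    have : G t = F t - q t := rfl
    rw [this] at h
    rw [hq_def] at h
    simp only at h
    linarith
  rcases le_or_gt t s with hts | hts
  · rcases eq_or_lt_of_le hts with rfl | hts'
    · rw [hGs]
    have hanti : AntitoneOn G (Set.Icc t s) := by
      apply antitoneOn_of_hasDerivWithinAt_nonpos (convex_Icc t s)
          (hGc.mono ?_) (f' := G') ?_ ?_
      · intro u hu; exact ⟨ht.1.trans_le hu.1, (hu.2.trans_lt hs4).le⟩
      · intro u hu
        rw [interior_Icc] at hu
        exact ((hGd u ⟨ht.1.trans hu.1, hu.2.trans hs4⟩).hasDerivWithinAt)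
      · intro u hu
        rw [interior_Icc] at hu
        exact concave_sign_left hG'conc hsmem hrmem hr.1 hG's hG'r
          ⟨ht.1.trans hu.1, hu.2.trans hs4⟩ hu.2
    have := hanti (Set.left_mem_Icc.2 hts) (Set.right_mem_Icc.2 hts) hts
    rw [hGs] at this; linarith
  · rcases le_or_gt t r with htr | htr
    · have hmono : MonotoneOn G (Set.Icc s r) := by
        apply monotoneOn_of_hasDerivWithinAt_nonneg (convex_Icc s r)
            (hGc.mono ?_) (f' := G') ?_ ?_
        · intro u hu; exact ⟨hs0.trans_le hu.1, (hu.2.trans_lt hr.2).le⟩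
        · intro u hu
          rw [interior_Icc] at hu
          exact ((hGd u ⟨hs0.trans hu.1, hu.2.trans hr.2⟩).hasDerivWithinAt)
        · intro u hu
          rw [interior_Icc] at hu
          exact concave_sign_mid hG'conc hsmem hrmem hr.1 hG's hG'r hu.1 hu.2
      have := hmono (Set.left_mem_Icc.2 (by linarith)) ⟨hts.le, htr⟩ hts.le
      rw [hGs] at this; linarith
    · have hanti : AntitoneOn G (Set.Icc r 4) := by
        apply antitoneOn_of_hasDerivWithinAt_nonpos (convex_Icc r 4)
            (hGc.mono ?_) (f' := G') ?_ ?_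
        · intro u hu; exact ⟨hrmem.1.trans_le hu.1, hu.2⟩
        · intro u hu
          rw [interior_Icc] at hu
          exact ((hGd u ⟨hrmem.1.trans hu.1, hu.2⟩).hasDerivWithinAt)
        · intro u hu
          rw [interior_Icc] at hu
          exact concave_sign_right hG'conc hsmem hrmem hr.1 hG's hG'r
            ⟨hrmem.1.trans hu.1, hu.2⟩ hu.1
      have := hanti ⟨htr.le, ht.2⟩ (Set.right_mem_Icc.2 (by linarith [hrmem.2])) ht.2
      rw [hG4] at this; linarith

open Finset

local notation "⟪" a ", " b "⟫" => @inner ℝ _ _ a b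

lemma simplex_sum_zero (d : ℕ) (hd : 2 ≤ d) (x : Fin (d+1) → EuclideanSpace ℝ (Fin d))
    (hnorm : ∀ i, ‖x i‖ = 1)
    (hinner : ∀ i j, i ≠ j → (inner ℝ (x i) (x j) : ℝ) = -1/(d:ℝ)) :
    ∑ i, x i = 0 := by
  have hd0 : (d:ℝ) ≠ 0 := by positivity
  have h : ⟪∑ i, x i, ∑ j, x j⟫ = 0 := by
    rw [sum_inner]
    have : ∀ i : Fin (d+1), ⟪x i, ∑ j, x j⟫ = 0 := by
      intro i
      rw [inner_sum]
      rw [← Finset.add_sum_erase _ _ (Finset.mem_univ i)]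
      rw [real_inner_self_eq_norm_sq, hnorm, Finset.sum_congr rfl
        (fun j hj => hinner i j (fun h => (Finset.mem_erase.1 hj).1 h.symm))]
      rw [Finset.sum_const, Finset.card_erase_of_mem (Finset.mem_univ i)]
      simp only [Finset.card_univ, Fintype.card_fin, Nat.add_sub_cancel, nsmul_eq_mul,
        one_pow]
      field_simp
      norm_num
    simp [this]
  have := real_inner_self_eq_norm_sq (∑ i, x i)
  rw [h] at this
  have : ‖∑ i, x i‖ = 0 := by nlinarith [norm_nonneg (∑ i, x i)]
  exact norm_eq_zero.1 this

lemma simplex_frame (d : ℕ) (hd : 2 ≤ d) (x : Fin (d+1) → EuclideanSpace ℝ (Fin d))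
    (hnorm : ∀ i, ‖x i‖ = 1)
    (hinner : ∀ i j, i ≠ j → (inner ℝ (x i) (x j) : ℝ) = -1/(d:ℝ)) :
    ∀ y : EuclideanSpace ℝ (Fin d),
      ∑ i, (⟪x i, y⟫ : ℝ) • x i = (((d:ℝ)+1)/d) • y := by
  have hd0 : (d:ℝ) ≠ 0 := by positivity
  have hdpos : (0:ℝ) < d := by positivity
  have hsum := simplex_sum_zero d hd x hnorm hinner
  -- the submodule of good vectors
  set S : Submodule ℝ (EuclideanSpace ℝ (Fin d)) :=
    { carrier := {y | ∑ i, (⟪x i, y⟫ : ℝ) • x i = (((d:ℝ)+1)/d) • y}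
      add_mem' := by
        intro a b ha hb
        simp only [Set.mem_setOf_eq] at *
        simp only [inner_add_right, add_smul, Finset.sum_add_distrib, ha, hb, smul_add]
      zero_mem' := by simp
      smul_mem' := by
        intro r a ha
        simp only [Set.mem_setOf_eq] at *
        simp only [inner_smul_right, mul_smul, ← Finset.smul_sum, ha]
        rw [smul_comm] } with hS_def
  have hx_mem : ∀ j, x j ∈ S := by
    intro j
    show ∑ i, (⟪x i, x j⟫ : ℝ) • x i = (((d:ℝ)+1)/d) • x j
    rw [← Finset.add_sum_erase _ _ (Finset.mem_univ j)]
    have h1 : ∀ i ∈ Finset.univ.erase j, (⟪x i, x j⟫ : ℝ) • x i = (-1/(d:ℝ)) • x i := by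
      intro i hi
      rw [hinner i j (Finset.mem_erase.1 hi).1]
    rw [Finset.sum_congr rfl h1, ← Finset.smul_sum]
    have h2 : ∑ i ∈ Finset.univ.erase j, x i = - x j := by
      rw [Finset.sum_erase_eq_sub (Finset.mem_univ j), hsum]
      simp
    rw [h2, real_inner_self_eq_norm_sq, hnorm]
    rw [smul_neg]
    rw [show ((1:ℝ)^2) • x j = (1:ℝ) • x j by norm_num]
    rw [← sub_eq_add_neg, ← sub_smul]
    congr 1
    field_simp
    ring
  -- linear independence of x ∘ succ
  have li : LinearIndependent ℝ (fun i : Fin d => x i.succ) := by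
    rw [Fintype.linearIndependent_iff]
    intro c hc
    have hnormsq : ⟪∑ i, c i • x i.succ, ∑ j, c j • x j.succ⟫ = (0:ℝ) := by
      rw [hc]; simp
    rw [sum_inner] at hnormsq
    have hexp : ∀ i : Fin d, ⟪c i • x i.succ, ∑ j, c j • x j.succ⟫
        = c i * c i * (1 + 1/d) + (-1/d) * (c i * ∑ j, c j) := by
      intro i
      rw [real_inner_smul_left, inner_sum]
      have : ∀ j : Fin d, (⟪x i.succ, c j • x j.succ⟫:ℝ)
          = c j * ((if i = j then (1:ℝ) + 1/d else 0) + (-1/d)) := by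
        intro j
        rw [real_inner_smul_right]
        congr 1
        by_cases h : i = j
        · subst h
          rw [real_inner_self_eq_norm_sq, hnorm]
          simp only [if_pos rfl]
          field_simp
          simp only [if_true]
          have h' : (d:ℝ) * ((d+1)/d) = d+1 := by field_simp
          linarith
        · rw [hinner _ _ (fun hh => h (Fin.succ_injective d hh))]
          simp [h]
      rw [Finset.sum_congr rfl (fun j _ => this j)]
      simp only [mul_add, Finset.sum_add_distrib, mul_ite, mul_zero, Finset.sum_ite_eq,
        Finset.mem_univ, if_true]
      rw [show (∑ j, c j * (-1/(d:ℝ))) = (∑ j, c j) * (-1/(d:ℝ)) from (Finset.sum_mul ..).symm]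
      ring
    rw [Finset.sum_congr rfl (fun i _ => hexp i)] at hnormsq
    simp only [Finset.sum_add_distrib, ← Finset.sum_mul, ← Finset.mul_sum] at hnormsq
    -- hnormsq : (∑ c i * c i) * (1+1/d) + (-1/d) * ((∑ c) * (∑ c)) = 0
    have hcs : (∑ i, c i)^2 ≤ (d:ℝ) * ∑ i, (c i)^2 := by
      have := sq_sum_le_card_mul_sum_sq (s := Finset.univ) (f := c)
      simpa using this
    have hsq : ∑ i, (c i)^2 ≤ 0 := by
      have e1 : ∑ i, c i * c i = ∑ i, (c i)^2 := by
        apply Finset.sum_congr rfl; intro i _; ring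
      rw [e1] at hnormsq
      have h5 : ((∑ i, c i ^ 2) * (1 + 1/(d:ℝ)) + -1/(d:ℝ) * ((∑ j, c j) * ∑ j, c j)) * d = 0 := by
        rw [hnormsq]; ring
      field_simp at h5
      nlinarith [h5, hcs]
    intro i
    have h1 : (c i)^2 ≤ 0 := by
      have : ∀ j ∈ Finset.univ, (0:ℝ) ≤ (c j)^2 := fun j _ => sq_nonneg _
      calc (c i)^2 = ∑ j, (c j)^2 - ∑ j ∈ Finset.univ.erase i, (c j)^2 := by
            rw [Finset.sum_erase_eq_sub (Finset.mem_univ i)]; ring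
        _ ≤ 0 - 0 := by
            refine sub_le_sub hsq (Finset.sum_nonneg (fun j _ => sq_nonneg _))
        _ = 0 := by ring
    nlinarith [sq_nonneg (c i)]
  haveI : Nonempty (Fin d) := ⟨⟨0, by omega⟩⟩
  have hspan : Submodule.span ℝ (Set.range (fun i : Fin d => x i.succ)) = ⊤ := by
    apply li.span_eq_top_of_card_eq_finrank
    simp [finrank_euclideanSpace_fin]
  intro y
  have hy : y ∈ S := by
    have : (⊤ : Submodule ℝ (EuclideanSpace ℝ (Fin d))) ≤ S := by
      rw [← hspan]
      rw [Submodule.span_le]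
      rintro _ ⟨i, rfl⟩
      exact hx_mem _
    exact this Submodule.mem_top
  exact hy

theorem stmt_11 (d : ℕ) (hd : 2 ≤ d) (f : ℝ → EReal) (f' : ℝ → ℝ)
    (hne_bot : ∀ t ∈ Set.Icc (0:ℝ) 4, f t ≠ ⊥)
    (hfin : ∀ t ∈ Set.Ioc (0:ℝ) 4, f t ≠ ⊤)
    (hcont : ContinuousOn f (Set.Ioc (0:ℝ) 4))
    (hderiv : ∀ t ∈ Set.Ioo (0:ℝ) 4, HasDerivAt (fun s => (f s).toReal) (f' t) t)
    (hconc : ConcaveOn ℝ (Set.Ioo (0:ℝ) 4) f')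
    (hlim : Filter.Tendsto f (nhdsWithin 0 (Set.Ioi 0)) (nhds (f 0)))
    (x : Fin (d+1) → EuclideanSpace ℝ (Fin d))
    (hnorm : ∀ i, ‖x i‖ = 1)
    (hinner : ∀ i j, i ≠ j → (inner ℝ (x i) (x j) : ℝ) = -1/(d:ℝ)) :
    (∀ y : EuclideanSpace ℝ (Fin d), ‖y‖ = 1 →
      f 4 + ((d:ℝ) : EReal) * f (2 - 2/(d:ℝ)) ≤ ∑ i, f (‖y - x i‖^2)) ∧
    (∀ k, ∑ i, f (‖(-(x k)) - x i‖^2) = f 4 + ((d:ℝ) : EReal) * f (2 - 2/(d:ℝ))) ∧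
    (⨅ y : Metric.sphere (0 : EuclideanSpace ℝ (Fin d)) 1,
        ∑ i, f (‖(y : EuclideanSpace ℝ (Fin d)) - x i‖^2))
      = f 4 + ((d:ℝ) : EReal) * f (2 - 2/(d:ℝ)) := by
  have hdpos : (0:ℝ) < d := by
    have : 0 < d := by omega
    exact_mod_cast this
  have hd0 : (d:ℝ) ≠ 0 := hdpos.ne'
  have hd2 : (2:ℝ) ≤ d := by exact_mod_cast hd
  set s : ℝ := 2 - 2/(d:ℝ) with hs_def
  have h2d : 0 < 2/(d:ℝ) := by positivity
  have h2d1 : 2/(d:ℝ) ≤ 1 := by rw [div_le_one hdpos]; linarith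
  have hs0 : 0 < s := by rw [hs_def]; linarith
  have hs4 : s < 4 := by rw [hs_def]; linarith
  have hsIoc : s ∈ Set.Ioc (0:ℝ) 4 := ⟨hs0, by linarith⟩
  have h4Ioc : (4:ℝ) ∈ Set.Ioc (0:ℝ) 4 := ⟨by norm_num, le_refl _⟩
  set F : ℝ → ℝ := fun t => (f t).toReal with hF_def
  have hFc : ContinuousOn F (Set.Ioc 0 4) := by
    intro t ht
    exact (EReal.tendsto_toReal (hfin t ht) (hne_bot t ⟨ht.1.le, ht.2⟩)).comp (hcont t ht)
  have key := key_real F f' s hs0 hs4 hFc (fun t ht => hderiv t ht) hconc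
  set C : ℝ := (F 4 - F s - f' s * (4 - s))/(4-s)^2 with hC_def
  set q : ℝ → ℝ := fun t => F s + f' s * (t - s) + C * (t-s)^2 with hq_def
  have h4s : (0:ℝ) < 4 - s := by linarith
  have hq4 : q 4 = F 4 := by
    rw [hq_def]
    simp only [hC_def]
    field_simp
    ring
  have hqs : q s = F s := by simp [hq_def]
  have hqcont : Continuous q := by rw [hq_def]; fun_prop
  have hfs : f s = ((F s : ℝ) : EReal) :=
    (EReal.coe_toReal (hfin s hsIoc) (hne_bot s ⟨hs0.le, hsIoc.2⟩)).symm
  have hf4 : f 4 = ((F 4 : ℝ) : EReal) :=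
    (EReal.coe_toReal (hfin 4 h4Ioc) (hne_bot 4 ⟨by norm_num, le_refl _⟩)).symm
  have hq_le' : ∀ t ∈ Set.Ioc (0:ℝ) 4, ((q t : ℝ) : EReal) ≤ f t := by
    intro t ht
    rw [show f t = ((F t:ℝ):EReal) from
      (EReal.coe_toReal (hfin t ht) (hne_bot t ⟨ht.1.le, ht.2⟩)).symm]
    exact EReal.coe_le_coe_iff.2 (key t ht)
  have hq_le : ∀ t ∈ Set.Icc (0:ℝ) 4, ((q t : ℝ) : EReal) ≤ f t := by
    intro t ht
    rcases eq_or_lt_of_le ht.1 with h0 | h0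
    · rw [← h0]
      have htend : Filter.Tendsto (fun u => ((q u : ℝ) : EReal)) (nhdsWithin 0 (Set.Ioi 0))
          (nhds ((q 0 : ℝ) : EReal)) :=
        ((continuous_coe_real_ereal.comp hqcont).tendsto 0).mono_left nhdsWithin_le_nhds
      refine le_of_tendsto_of_tendsto htend hlim ?_
      filter_upwards [Ioc_mem_nhdsGT (by norm_num : (0:ℝ) < 4)] with u hu
      exact hq_le' u hu
    · exact hq_le' t ⟨h0, ht.2⟩
  have hcoe_sum : ∀ (g : Fin (d+1) → ℝ),
      ((∑ i, g i : ℝ) : EReal) = ∑ i, ((g i : ℝ) : EReal) := by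
    intro g
    exact map_sum (⟨⟨fun r => ((r:ℝ) : EReal), by simp⟩, fun a b => by simp⟩ : ℝ →+ EReal)
      g Finset.univ
  -- geometry
  have hsumx := simplex_sum_zero d hd x hnorm hinner
  have hframe := simplex_frame d hd x hnorm hinner
  have hysub : ∀ (y : EuclideanSpace ℝ (Fin d)), ‖y‖ = 1 →
      ∀ i, ‖y - x i‖^2 = 2 - 2 * (inner ℝ y (x i) : ℝ) := by
    intro y hy i
    rw [norm_sub_sq_real, hy, hnorm]
    ring
  have hsumu : ∀ y : EuclideanSpace ℝ (Fin d), ∑ i, (inner ℝ y (x i) : ℝ) = 0 := by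
    intro y
    rw [← inner_sum, hsumx, inner_zero_right]
  have hsumu2 : ∀ y : EuclideanSpace ℝ (Fin d), ‖y‖ = 1 →
      ∑ i, (inner ℝ y (x i) : ℝ)^2 = ((d:ℝ)+1)/d := by
    intro y hy
    have h2 : (inner ℝ (∑ i, (inner ℝ (x i) y : ℝ) • x i) y : ℝ)
        = (inner ℝ ((((d:ℝ)+1)/d) • y) y : ℝ) := by rw [hframe y]
    rw [sum_inner] at h2
    simp only [real_inner_smul_left] at h2
    rw [real_inner_self_eq_norm_sq, hy] at h2
    rw [show ∑ i, (inner ℝ y (x i) : ℝ)^2 = ∑ i, (inner ℝ (x i) y : ℝ) * (inner ℝ (x i) y : ℝ) from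
      Finset.sum_congr rfl (fun i _ => by rw [real_inner_comm]; ring)]
    rw [h2]
    ring
  have hbound : ∀ (y : EuclideanSpace ℝ (Fin d)), ‖y‖ = 1 →
      ∀ i, ‖y - x i‖^2 ∈ Set.Icc (0:ℝ) 4 := by
    intro y hy i
    constructor
    · positivity
    · rw [hysub y hy i]
      have := abs_real_inner_le_norm y (x i)
      rw [hy, hnorm] at this
      have := abs_le.1 this
      linarith [this.1]
  -- main inequality
  have hmain : ∀ y : EuclideanSpace ℝ (Fin d), ‖y‖ = 1 →
      f 4 + ((d:ℝ) : EReal) * f s ≤ ∑ i, f (‖y - x i‖^2) := by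
    intro y hy
    have hqsum : F 4 + (d:ℝ) * F s = ∑ i, q (‖y - x i‖^2) := by
      have e : ∀ i, q (‖y - x i‖^2) = (F s + f' s*(2 - s) + C*(2-s)^2)
          + (-(2*f' s) - 4*C*(2-s)) * (inner ℝ y (x i) : ℝ)
          + (4*C) * (inner ℝ y (x i) : ℝ)^2 := by
        intro i
        rw [hysub y hy i, hq_def]
        ring
      rw [Finset.sum_congr rfl (fun i _ => e i)]
      rw [Finset.sum_add_distrib, Finset.sum_add_distrib, ← Finset.mul_sum, ← Finset.mul_sum,
        hsumu y, hsumu2 y hy, Finset.sum_const, Finset.card_univ, Fintype.card_fin,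
        nsmul_eq_mul, mul_zero]
      rw [← hq4, ← hqs, hq_def]
      simp only
      rw [hs_def]
      push_cast
      field_simp
      ring
    calc f 4 + ((d:ℝ) : EReal) * f s = ((F 4 + (d:ℝ) * F s : ℝ) : EReal) := by
          rw [hf4, hfs, ← EReal.coe_mul, ← EReal.coe_add]
      _ = ((∑ i, q (‖y - x i‖^2) : ℝ) : EReal) := by rw [hqsum]
      _ = ∑ i, ((q (‖y - x i‖^2) : ℝ) : EReal) := hcoe_sum _
      _ ≤ ∑ i, f (‖y - x i‖^2) :=
          Finset.sum_le_sum (fun i _ => hq_le _ (hbound y hy i))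
  -- equality
  have heq : ∀ k, ∑ i, f (‖(-(x k)) - x i‖^2) = f 4 + ((d:ℝ) : EReal) * f s := by
    intro k
    have hyk : ‖(-(x k) : EuclideanSpace ℝ (Fin d))‖ = 1 := by
      rw [norm_neg]; exact hnorm k
    have ht : ∀ i, ‖(-(x k)) - x i‖^2 = 2 + 2*(inner ℝ (x k) (x i) : ℝ) := by
      intro i
      rw [hysub _ hyk i, inner_neg_left]
      ring
    have htk : ‖(-(x k)) - x k‖^2 = 4 := by
      rw [ht k, real_inner_self_eq_norm_sq, hnorm]
      norm_num
    have hti : ∀ i ∈ Finset.univ.erase k, ‖(-(x k)) - x i‖^2 = s := by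
      intro i hi
      rw [ht i, hinner k i (fun h => (Finset.mem_erase.1 hi).1 h.symm), hs_def]
      ring
    rw [← Finset.add_sum_erase _ _ (Finset.mem_univ k), htk]
    rw [Finset.sum_congr rfl (fun i hi => by rw [hti i hi])]
    rw [Finset.sum_const, Finset.card_erase_of_mem (Finset.mem_univ k)]
    simp only [Finset.card_univ, Fintype.card_fin, Nat.add_sub_cancel]
    rw [hfs, ← EReal.coe_nsmul]
    congr 1
    rw [← EReal.coe_mul]
    congr 1
    rw [nsmul_eq_mul]
  refine ⟨hmain, heq, ?_⟩
  have hy0 : (-(x 0) : EuclideanSpace ℝ (Fin d)) ∈ Metric.sphere (0:EuclideanSpace ℝ (Fin d)) 1 := by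
    rw [mem_sphere_zero_iff_norm, norm_neg]
    exact hnorm 0
  apply le_antisymm
  · exact (iInf_le _ (⟨-(x 0), hy0⟩ : Metric.sphere (0:EuclideanSpace ℝ (Fin d)) 1)).trans_eq
      (heq 0)
  · exact le_iInf (fun y => hmain y (mem_sphere_zero_iff_norm.1 y.2))
end

section
/- Let d ≥ 2 and f : [0,4] → (-∞,∞) be continuous on (0,4], finite at 0 with lim_{t→0⁺} f(t) = f(0), differentiable on (0,4) with f' concave on (0,4). Let ω* = {x_0,...,x_d} be the vertices of a regular d-simplex inscribed in S^{d-1}. Then max_{x ∈ S^{d-1}} ∑_{i=0}^d f(|x - x_i|²) = f(0) + d·f(2 + 2/d), and the maximum is achieved at every point of ω*. -/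
lemma cont_Icc_of_Ioc (f : ℝ → ℝ) (hcont : ContinuousOn f (Set.Ioc (0:ℝ) 4))
    (hlim : Filter.Tendsto f (nhdsWithin 0 (Set.Ioi 0)) (nhds (f 0))) :
    ContinuousOn f (Set.Icc 0 4) := by
  intro t ht
  rcases eq_or_ne t 0 with rfl | hne
  · unfold ContinuousWithinAt
    have h1 : Filter.Tendsto f (nhdsWithin 0 (insert 0 (Set.Ioi 0))) (nhds (f 0)) := by
      rw [nhdsWithin_insert]
      exact Filter.Tendsto.sup (tendsto_pure_nhds f 0) hlim
    apply h1.mono_left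
    apply nhdsWithin_mono
    intro s hs
    rcases eq_or_ne s 0 with rfl | h
    · exact Set.mem_insert _ _
    · exact Set.mem_insert_of_mem _ (lt_of_le_of_ne hs.1 (Ne.symm h))
  · have htpos : 0 < t := lt_of_le_of_ne ht.1 (Ne.symm hne)
    apply (hcont t ⟨htpos, ht.2⟩).mono_of_mem_nhdsWithin
    apply mem_nhdsWithin.2 ⟨Set.Ioi 0, isOpen_Ioi, htpos, ?_⟩
    rintro s ⟨hs1, hs2⟩
    exact ⟨hs1, hs2.2⟩


lemma quad_upper (f f' : ℝ → ℝ) (τ : ℝ) (hτ : τ ∈ Set.Ioo (0:ℝ) 4)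
    (hcont : ContinuousOn f (Set.Icc 0 4))
    (hderiv : ∀ t ∈ Set.Ioo (0:ℝ) 4, HasDerivAt f (f' t) t)
    (hconc : ConcaveOn ℝ (Set.Ioo (0:ℝ) 4) f') :
    ∃ α β : ℝ, (f τ = f 0 + α * τ + β * τ^2) ∧
      ∀ t ∈ Set.Icc (0:ℝ) 4, f t ≤ f 0 + α * t + β * t^2 := by
  obtain ⟨hτ0, hτ4⟩ := hτ
  obtain ⟨β, hβ⟩ : ∃ β : ℝ, β = (f' τ * τ - (f τ - f 0)) / τ^2 := ⟨_, rfl⟩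
  obtain ⟨α, hα⟩ : ∃ α : ℝ, α = f' τ - 2 * β * τ := ⟨_, rfl⟩
  have hτne : τ ≠ 0 := ne_of_gt hτ0
  have hqτ : f τ = f 0 + α * τ + β * τ^2 := by
    rw [hα, hβ]; field_simp; ring
  refine ⟨α, β, hqτ, ?_⟩
  -- h := f t - quadratic, g := its derivative
  set h : ℝ → ℝ := fun t => f t - (f 0 + α * t + β * t^2) with hh
  set g : ℝ → ℝ := fun t => f' t - (α + 2 * β * t) with hg
  have hhderiv : ∀ t ∈ Set.Ioo (0:ℝ) 4, HasDerivAt h (g t) t := by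
    intro t ht
    have hq : HasDerivAt (fun t : ℝ => f 0 + α * t + β * t^2) (α + 2 * β * t) t := by
      have h1 : HasDerivAt (fun t : ℝ => f 0 + α * t + β * t^2)
          (0 + α * 1 + β * (2 * t^1)) t := by
        exact (((hasDerivAt_const t (f 0)).add ((hasDerivAt_id t).const_mul α)).add
          ((hasDerivAt_pow 2 t).const_mul β))
      simpa using h1.congr_deriv (by ring)
    exact (hderiv t ht).sub hq
  have hhcont : ContinuousOn h (Set.Icc 0 4) := by
    apply hcont.sub
    exact (continuousOn_const.add (continuousOn_const.mul continuousOn_id)).add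
      (continuousOn_const.mul (continuousOn_id.pow 2))
  have hh0 : h 0 = 0 := by simp [hh]
  have hhτ : h τ = 0 := by simp [hh, hqτ]
  have hgτ : g τ = 0 := by simp [hg, hα]
  -- Rolle
  obtain ⟨ξ, hξmem, hgξ⟩ : ∃ ξ ∈ Set.Ioo 0 τ, g ξ = 0 := by
    apply exists_hasDerivAt_eq_zero hτ0 (hhcont.mono ?_) (by rw [hh0, hhτ])
    · intro t ht
      exact hhderiv t ⟨ht.1, lt_trans ht.2 hτ4⟩
    · exact Set.Icc_subset_Icc le_rfl (le_of_lt hτ4)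
  obtain ⟨hξ0, hξτ⟩ := hξmem
  have hfξ : f' ξ = α + 2 * β * ξ := by
    have := hgξ; simp only [hg] at this; linarith
  have hfτ : f' τ = α + 2 * β * τ := by
    have := hgτ; simp only [hg] at this; linarith
  have hξ4 : ξ < 4 := lt_trans hξτ hτ4
  -- sign facts for g from concavity
  have hmemξ : ξ ∈ Set.Ioo (0:ℝ) 4 := ⟨hξ0, hξ4⟩
  have hmemτ : τ ∈ Set.Ioo (0:ℝ) 4 := ⟨hτ0, hτ4⟩
  have gle1 : ∀ t ∈ Set.Ioo (0:ℝ) 4, t < ξ → g t ≤ 0 := by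
    rintro t ⟨ht1, ht2⟩ htξ
    have hpos : (0:ℝ) < τ - t := by linarith
    have hne : τ - t ≠ 0 := ne_of_gt hpos
    have ha : (0:ℝ) ≤ (τ - ξ) / (τ - t) := by apply div_nonneg <;> linarith
    have hb : (0:ℝ) ≤ (ξ - t) / (τ - t) := by
      apply div_nonneg <;> linarith
    have hab : (τ - ξ) / (τ - t) + (ξ - t) / (τ - t) = 1 := by
      rw [← add_div, div_eq_one_iff_eq hne]; ring
    have key := hconc.2 (Set.mem_Ioo.2 ⟨ht1, ht2⟩) hmemτ ha hb hab
    have hc : ((τ - ξ) / (τ - t)) • t + ((ξ - t) / (τ - t)) • τ = ξ := by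
      simp only [smul_eq_mul]
      rw [div_mul_eq_mul_div, div_mul_eq_mul_div, ← add_div, div_eq_iff hne]; ring
    rw [hc] at key
    simp only [smul_eq_mul] at key
    have h3 := mul_le_mul_of_nonneg_left key (le_of_lt hpos)
    have e : (τ - t) * ((τ - ξ) / (τ - t) * f' t + (ξ - t) / (τ - t) * f' τ) = (τ - ξ) * f' t + (ξ - t) * f' τ := by
      rw [div_mul_eq_mul_div, div_mul_eq_mul_div, ← add_div, mul_comm, div_mul_cancel₀ _ hne]
    have keym : (τ - ξ) * f' t + (ξ - t) * f' τ ≤ (τ - t) * f' ξ := by rwa [e] at h3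
    rw [hfξ, hfτ] at keym
    have h5 : (0:ℝ) < τ - ξ := by linarith
    have hfin : (τ - ξ) * (f' t - (α + 2 * β * t)) ≤ 0 := by linarith [keym]
    simp only [hg]
    by_contra hcon
    push_neg at hcon
    linarith [hfin, mul_pos h5 hcon]
  have gle2 : ∀ t ∈ Set.Icc ξ τ, 0 ≤ g t := by
    rintro t ⟨h1, h2⟩
    have hpos : (0:ℝ) < τ - ξ := by linarith
    have hne : τ - ξ ≠ 0 := ne_of_gt hpos
    have ha : (0:ℝ) ≤ (τ - t) / (τ - ξ) := by apply div_nonneg <;> linarith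
    have hb : (0:ℝ) ≤ (t - ξ) / (τ - ξ) := by apply div_nonneg <;> linarith
    have hab : (τ - t) / (τ - ξ) + (t - ξ) / (τ - ξ) = 1 := by
      rw [← add_div, div_eq_one_iff_eq hne]; ring
    have key := hconc.2 hmemξ hmemτ ha hb hab
    have hc : ((τ - t) / (τ - ξ)) • ξ + ((t - ξ) / (τ - ξ)) • τ = t := by
      simp only [smul_eq_mul]
      rw [div_mul_eq_mul_div, div_mul_eq_mul_div, ← add_div, div_eq_iff hne]; ring
    rw [hc] at key
    simp only [smul_eq_mul] at key
    have h3 := mul_le_mul_of_nonneg_left key (le_of_lt hpos)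
    have e : (τ - ξ) * ((τ - t) / (τ - ξ) * f' ξ + (t - ξ) / (τ - ξ) * f' τ) = (τ - t) * f' ξ + (t - ξ) * f' τ := by
      rw [div_mul_eq_mul_div, div_mul_eq_mul_div, ← add_div, mul_comm, div_mul_cancel₀ _ hne]
    have keym : (τ - t) * f' ξ + (t - ξ) * f' τ ≤ (τ - ξ) * f' t := by rwa [e] at h3
    rw [hfξ, hfτ] at keym
    have hfin : (0:ℝ) ≤ (τ - ξ) * (f' t - (α + 2 * β * t)) := by linarith [keym]
    simp only [hg]
    by_contra hcon
    push_neg at hcon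
    linarith [hfin, mul_pos hpos (neg_pos.2 hcon)]
  have gle3 : ∀ t ∈ Set.Ioo (0:ℝ) 4, τ < t → g t ≤ 0 := by
    rintro t ⟨ht1, ht2⟩ hτt
    have hpos : (0:ℝ) < t - ξ := by linarith
    have hne : t - ξ ≠ 0 := ne_of_gt hpos
    have ha : (0:ℝ) ≤ (t - τ) / (t - ξ) := by apply div_nonneg <;> linarith
    have hb : (0:ℝ) ≤ (τ - ξ) / (t - ξ) := by apply div_nonneg <;> linarith
    have hab : (t - τ) / (t - ξ) + (τ - ξ) / (t - ξ) = 1 := by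
      rw [← add_div, div_eq_one_iff_eq hne]; ring
    have key := hconc.2 hmemξ (Set.mem_Ioo.2 ⟨ht1, ht2⟩) ha hb hab
    have hc : ((t - τ) / (t - ξ)) • ξ + ((τ - ξ) / (t - ξ)) • t = τ := by
      simp only [smul_eq_mul]
      rw [div_mul_eq_mul_div, div_mul_eq_mul_div, ← add_div, div_eq_iff hne]; ring
    rw [hc] at key
    simp only [smul_eq_mul] at key
    have h3 := mul_le_mul_of_nonneg_left key (le_of_lt hpos)
    have e : (t - ξ) * ((t - τ) / (t - ξ) * f' ξ + (τ - ξ) / (t - ξ) * f' t) = (t - τ) * f' ξ + (τ - ξ) * f' t := by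
      rw [div_mul_eq_mul_div, div_mul_eq_mul_div, ← add_div, mul_comm, div_mul_cancel₀ _ hne]
    have keym : (t - τ) * f' ξ + (τ - ξ) * f' t ≤ (t - ξ) * f' τ := by rwa [e] at h3
    rw [hfξ, hfτ] at keym
    have h5 : (0:ℝ) < τ - ξ := by linarith
    have hfin : (τ - ξ) * (f' t - (α + 2 * β * t)) ≤ 0 := by linarith [keym]
    simp only [hg]
    by_contra hcon
    push_neg at hcon
    linarith [hfin, mul_pos h5 hcon]
  -- now: h ≤ 0 on [0,4]
  intro t ⟨ht0, ht4⟩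
  have key : h t ≤ 0 := by
    have hderiv' : ∀ s ∈ Set.Ioo (0:ℝ) 4, deriv h s = g s := fun s hs => (hhderiv s hs).deriv
    rcases le_or_gt t ξ with hcase | hcase
    · -- antitone on [0, ξ]
      have : AntitoneOn h (Set.Icc 0 ξ) := by
        apply antitoneOn_of_deriv_nonpos (convex_Icc 0 ξ)
          (hhcont.mono (Set.Icc_subset_Icc le_rfl (le_of_lt hξ4)))
        · intro s hs
          rw [interior_Icc] at hs
          exact ((hhderiv s ⟨hs.1, lt_trans hs.2 hξ4⟩).differentiableAt).differentiableWithinAt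
        · intro s hs
          rw [interior_Icc] at hs
          rw [hderiv' s ⟨hs.1, lt_trans hs.2 hξ4⟩]
          exact gle1 s ⟨hs.1, lt_trans hs.2 hξ4⟩ hs.2
      have := this (Set.left_mem_Icc.2 (le_of_lt hξ0)) ⟨ht0, hcase⟩ ht0
      rw [hh0] at this; exact this
    · rcases le_or_gt t τ with hcase2 | hcase2
      · -- monotone on [ξ, τ]
        have : MonotoneOn h (Set.Icc ξ τ) := by
          apply monotoneOn_of_deriv_nonneg (convex_Icc ξ τ)
            (hhcont.mono (Set.Icc_subset_Icc (le_of_lt hξ0) (le_of_lt hτ4)))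
          · intro s hs
            rw [interior_Icc] at hs
            exact ((hhderiv s ⟨lt_trans hξ0 hs.1, lt_trans hs.2 hτ4⟩).differentiableAt).differentiableWithinAt
          · intro s hs
            rw [interior_Icc] at hs
            rw [hderiv' s ⟨lt_trans hξ0 hs.1, lt_trans hs.2 hτ4⟩]
            exact gle2 s ⟨le_of_lt hs.1, le_of_lt hs.2⟩
        have := this ⟨le_of_lt hcase, hcase2⟩ (Set.right_mem_Icc.2 (le_of_lt hξτ)) hcase2
        rw [hhτ] at this; exact this
      · -- antitone on [τ, 4]
        have : AntitoneOn h (Set.Icc τ 4) := by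
          apply antitoneOn_of_deriv_nonpos (convex_Icc τ 4)
            (hhcont.mono (Set.Icc_subset_Icc (le_of_lt hτ0) le_rfl))
          · intro s hs
            rw [interior_Icc] at hs
            exact ((hhderiv s ⟨lt_trans hτ0 hs.1, hs.2⟩).differentiableAt).differentiableWithinAt
          · intro s hs
            rw [interior_Icc] at hs
            rw [hderiv' s ⟨lt_trans hτ0 hs.1, hs.2⟩]
            exact gle3 s ⟨lt_trans hτ0 hs.1, hs.2⟩ hs.1
        have := this (Set.left_mem_Icc.2 (le_of_lt hτ4)) ⟨le_of_lt hcase2, ht4⟩ (le_of_lt hcase2)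
        rw [hhτ] at this; exact this
  simpa [hh] using key


open Finset in
lemma simplex_facts (d : ℕ) (hd : 2 ≤ d)
    (x : Fin (d+1) → EuclideanSpace ℝ (Fin d))
    (hnorm : ∀ i, ‖x i‖ = 1)
    (hinner : ∀ i j, i ≠ j → (inner ℝ (x i) (x j) : ℝ) = -1/(d:ℝ)) :
    (∑ i, x i = 0) ∧
    (∀ y : EuclideanSpace ℝ (Fin d),
      ∑ i, (inner ℝ y (x i) : ℝ)^2 = (1 + 1/(d:ℝ)) * ‖y‖^2) := by
  have hdpos : (0:ℝ) < (d:ℝ) := by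
    have : (0:ℕ) < d := by omega
    exact_mod_cast this
  have hdne : (d:ℝ) ≠ 0 := ne_of_gt hdpos
  have hself : ∀ i, (inner ℝ (x i) (x i) : ℝ) = 1 := by
    intro i
    rw [real_inner_self_eq_norm_sq, hnorm]; norm_num
  -- row sums of Gram matrix are 0
  have hrow : ∀ i, ∑ j, (inner ℝ (x i) (x j) : ℝ) = 0 := by
    intro i
    rw [← Finset.sum_erase_add _ _ (Finset.mem_univ i)]
    have h1 : ∑ j ∈ Finset.univ.erase i, (inner ℝ (x i) (x j) : ℝ)
        = ∑ j ∈ Finset.univ.erase i, (-1/(d:ℝ)) := by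
      apply Finset.sum_congr rfl
      intro j hj
      exact hinner i j (Ne.symm (Finset.ne_of_mem_erase hj))
    rw [h1, Finset.sum_const, Finset.card_erase_of_mem (Finset.mem_univ i), hself]
    simp [Finset.card_univ]
    field_simp
    ring
  -- sum of vectors is 0
  have hsum : ∑ i, x i = 0 := by
    have h0 : (inner ℝ (∑ i, x i) (∑ i, x i) : ℝ) = 0 := by
      rw [sum_inner]
      rw [Finset.sum_congr rfl (fun i _ => inner_sum _ _ _)]
      rw [Finset.sum_congr rfl (fun i _ => hrow i)]
      simp
    exact inner_self_eq_zero.mp h0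
  refine ⟨hsum, ?_⟩
  have hsum_inner : ∀ y : EuclideanSpace ℝ (Fin d), ∑ i, (inner ℝ y (x i) : ℝ) = 0 := by
    intro y
    rw [← inner_sum, hsum, inner_zero_right]
  -- linear independence of differences
  set v : Fin d → EuclideanSpace ℝ (Fin d) := fun i => x i.succ - x 0 with hv
  have hgram : ∀ i j : Fin d, (inner ℝ (v i) (v j) : ℝ) =
      if i = j then 2 + 2/(d:ℝ) else 1 + 1/(d:ℝ) := by
    intro i j
    simp only [hv, inner_sub_left, inner_sub_right]
    rcases eq_or_ne i j with rfl | hne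
    · rw [hself, hself, hinner _ _ (Fin.succ_ne_zero i), hinner _ _ (Fin.succ_ne_zero i).symm]
      rw [if_pos rfl]; field_simp; ring
    · rw [hinner _ _ (by simpa using hne), hself,
        hinner _ _ (Fin.succ_ne_zero i), hinner _ _ (Fin.succ_ne_zero j).symm]
      rw [if_neg hne]; field_simp; ring
  have hlin : LinearIndependent ℝ v := by
    rw [Fintype.linearIndependent_iff]
    intro g hg j
    have hz : ∀ j, (inner ℝ (∑ i, g i • v i) (v j) : ℝ) = 0 := by
      intro j; rw [hg, inner_zero_left]
    have hz' : ∀ j : Fin d, (1 + 1/(d:ℝ)) * (g j + ∑ i, g i) = 0 := by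
      intro j
      have hzj := hz j
      rw [sum_inner] at hzj
      simp only [real_inner_smul_left, hgram] at hzj
      have e1 : ∑ i, g i * (if i = j then 2 + 2/(d:ℝ) else 1 + 1/(d:ℝ))
          = (∑ i ∈ Finset.univ.erase j, g i * (1 + 1/(d:ℝ))) + g j * (2 + 2/(d:ℝ)) := by
        rw [← Finset.sum_erase_add _ _ (Finset.mem_univ j), if_pos rfl]
        congr 1
        apply Finset.sum_congr rfl
        intro i hi
        rw [if_neg (Finset.ne_of_mem_erase hi)]
      rw [e1, Finset.sum_erase_eq_sub (Finset.mem_univ j), ← Finset.sum_mul] at hzj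
      linear_combination hzj
    have hpos : (0:ℝ) < 1 + 1/(d:ℝ) := by positivity
    have hgj : ∀ j : Fin d, g j = -∑ i, g i := by
      intro j
      have := hz' j
      have h2 : g j + ∑ i, g i = 0 := by
        rcases mul_eq_zero.mp this with h | h
        · exact absurd h (ne_of_gt hpos)
        · exact h
      linarith
    have hS : ∑ i, g i = 0 := by
      have h3 : ∑ i, g i = ∑ _i : Fin d, (-∑ i, g i) := Finset.sum_congr rfl (fun i _ => hgj i)
      rw [Finset.sum_const, Finset.card_univ, Fintype.card_fin] at h3
      have : ∑ i, g i + (d:ℝ) * ∑ i, g i = 0 := by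
        rw [nsmul_eq_mul] at h3
        linarith [h3]
      have h4 : (1 + (d:ℝ)) * ∑ i, g i = 0 := by ring_nf; ring_nf at this; linarith
      rcases mul_eq_zero.mp h4 with h | h
      · exact absurd h (by positivity)
      · exact h
    rw [hgj j, hS, neg_zero]
  -- span is everything
  haveI : Nonempty (Fin d) := ⟨⟨0, by omega⟩⟩
  have hspan : Submodule.span ℝ (Set.range v) = ⊤ :=
    LinearIndependent.span_eq_top_of_card_eq_finrank hlin (by simp)
  -- perpendicular to all x i implies zero
  have hperp : ∀ z : EuclideanSpace ℝ (Fin d), (∀ i, (inner ℝ z (x i) : ℝ) = 0) → z = 0 := by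
    intro z hz
    have hzv : ∀ u ∈ Submodule.span ℝ (Set.range v), (inner ℝ z u : ℝ) = 0 := by
      intro u hu
      induction hu using Submodule.span_induction with
      | mem u hu =>
        obtain ⟨i, rfl⟩ := hu
        simp only [hv, inner_sub_right, hz, sub_zero, sub_self]
      | zero => simp
      | add u w _ _ h1 h2 => rw [inner_add_right, h1, h2, add_zero]
      | smul c u _ h1 => rw [real_inner_smul_right, h1, mul_zero]
    have := hzv z (by rw [hspan]; trivial)
    exact inner_self_eq_zero.mp this
  -- tight frame identity
  intro y
  set w : EuclideanSpace ℝ (Fin d) := (∑ i, (inner ℝ y (x i) : ℝ) • x i) - (1 + 1/(d:ℝ)) • y with hw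
  have hwperp : ∀ k, (inner ℝ w (x k) : ℝ) = 0 := by
    intro k
    rw [hw, inner_sub_left, sum_inner, real_inner_smul_left]
    have h1 : ∑ i, (inner ℝ y (x i) : ℝ) * (inner ℝ (x i) (x k) : ℝ)
        = (1 + 1/(d:ℝ)) * (inner ℝ y (x k) : ℝ) := by
      rw [← Finset.sum_erase_add _ _ (Finset.mem_univ k)]
      have h2 : ∑ i ∈ Finset.univ.erase k, (inner ℝ y (x i) : ℝ) * (inner ℝ (x i) (x k) : ℝ)
          = (-1/(d:ℝ)) * ∑ i ∈ Finset.univ.erase k, (inner ℝ y (x i) : ℝ) := by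
        rw [Finset.mul_sum]
        apply Finset.sum_congr rfl
        intro i hi
        rw [hinner _ _ (Finset.ne_of_mem_erase hi)]; ring
      have h3 : ∑ i ∈ Finset.univ.erase k, (inner ℝ y (x i) : ℝ)
          = - (inner ℝ y (x k) : ℝ) := by
        have := hsum_inner y
        rw [← Finset.sum_erase_add _ _ (Finset.mem_univ k)] at this
        linarith
      rw [h2, h3, hself]
      field_simp; ring
    rw [Finset.sum_congr rfl (fun i _ => real_inner_smul_left _ _ _), h1]
    ring
  have hw0 : w = 0 := hperp w hwperp
  have : (inner ℝ ((∑ i, (inner ℝ y (x i) : ℝ) • x i)) y : ℝ) = (1 + 1/(d:ℝ)) * (inner ℝ y y : ℝ) := by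
    have h5 : (inner ℝ w y : ℝ) = 0 := by rw [hw0, inner_zero_left]
    rw [hw, inner_sub_left, real_inner_smul_left] at h5
    linarith
  rw [sum_inner] at this
  have e2 : ∀ i, (inner ℝ ((inner ℝ y (x i) : ℝ) • x i) y : ℝ) = (inner ℝ y (x i) : ℝ)^2 := by
    intro i
    rw [real_inner_smul_left, sq]
    congr 1
    exact real_inner_comm _ _
  rw [Finset.sum_congr rfl (fun i _ => e2 i)] at this
  rw [this, real_inner_self_eq_norm_sq]

theorem stmt_12 (d : ℕ) (hd : 2 ≤ d) (f : ℝ → ℝ) (f' : ℝ → ℝ)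
    (hcont : ContinuousOn f (Set.Ioc (0:ℝ) 4))
    (hlim : Filter.Tendsto f (nhdsWithin 0 (Set.Ioi 0)) (nhds (f 0)))
    (hderiv : ∀ t ∈ Set.Ioo (0:ℝ) 4, HasDerivAt f (f' t) t)
    (hconc : ConcaveOn ℝ (Set.Ioo (0:ℝ) 4) f')
    (x : Fin (d+1) → EuclideanSpace ℝ (Fin d))
    (hnorm : ∀ i, ‖x i‖ = 1)
    (hinner : ∀ i j, i ≠ j → (inner ℝ (x i) (x j) : ℝ) = -1/(d:ℝ)) :
    (∀ y : EuclideanSpace ℝ (Fin d), ‖y‖ = 1 →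
      ∑ i, f (‖y - x i‖^2) ≤ f 0 + (d:ℝ) * f (2 + 2/(d:ℝ))) ∧
    (∀ k, ∑ i, f (‖x k - x i‖^2) = f 0 + (d:ℝ) * f (2 + 2/(d:ℝ))) := by
  have hdpos : (0:ℝ) < (d:ℝ) := by
    have : (0:ℕ) < d := by omega
    exact_mod_cast this
  have hdne : (d:ℝ) ≠ 0 := ne_of_gt hdpos
  have hd2 : (2:ℝ) ≤ (d:ℝ) := by exact_mod_cast hd
  have hτmem : (2 + 2/(d:ℝ)) ∈ Set.Ioo (0:ℝ) 4 := by
    constructor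
    · positivity
    · have : 2/(d:ℝ) ≤ 1 := by
        rw [div_le_one hdpos]; linarith
      linarith
  have hself : ∀ i, (inner ℝ (x i) (x i) : ℝ) = 1 := by
    intro i
    rw [real_inner_self_eq_norm_sq, hnorm]; norm_num
  -- distances between simplex points
  have hdist : ∀ k i, ‖x k - x i‖^2 = if i = k then (0:ℝ) else 2 + 2/(d:ℝ) := by
    intro k i
    rw [norm_sub_sq_real, hnorm, hnorm]
    rcases eq_or_ne i k with rfl | hne
    · rw [if_pos rfl, hself]; ring
    · rw [if_neg hne, hinner _ _ (Ne.symm hne)]; ring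
  -- second part
  have hpart2 : ∀ k, ∑ i, f (‖x k - x i‖^2) = f 0 + (d:ℝ) * f (2 + 2/(d:ℝ)) := by
    intro k
    have e : ∀ i, f (‖x k - x i‖^2) = if i = k then f 0 else f (2 + 2/(d:ℝ)) := by
      intro i
      rw [hdist k i]
      split <;> rfl
    rw [Finset.sum_congr rfl (fun i _ => e i),
      ← Finset.sum_erase_add _ _ (Finset.mem_univ k), if_pos rfl]
    have e2 : ∑ i ∈ Finset.univ.erase k, (if i = k then f 0 else f (2 + 2/(d:ℝ)))
        = ∑ i ∈ Finset.univ.erase k, f (2 + 2/(d:ℝ)) := by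
      apply Finset.sum_congr rfl
      intro i hi
      rw [if_neg (Finset.ne_of_mem_erase hi)]
    rw [e2, Finset.sum_const, Finset.card_erase_of_mem (Finset.mem_univ k),
      Finset.card_univ, Fintype.card_fin]
    simp only [Nat.add_sub_cancel, nsmul_eq_mul]
    ring
  refine ⟨?_, hpart2⟩
  -- first part
  obtain ⟨α, β, hqτ, hub⟩ := quad_upper f f' (2 + 2/(d:ℝ)) hτmem
    (cont_Icc_of_Ioc f hcont hlim) hderiv hconc
  obtain ⟨hsum0, hframe⟩ := simplex_facts d hd x hnorm hinner
  intro y hy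
  have hsc : ∑ i, (inner ℝ y (x i) : ℝ) = 0 := by
    rw [← inner_sum, hsum0, inner_zero_right]
  have hsq : ∑ i, (inner ℝ y (x i) : ℝ)^2 = 1 + 1/(d:ℝ) := by
    rw [hframe y, hy]; ring
  have hyd : ∀ i, ‖y - x i‖^2 = 2 - 2 * (inner ℝ y (x i) : ℝ) := by
    intro i
    rw [norm_sub_sq_real, hy, hnorm]; ring
  have habs : ∀ i, |(inner ℝ y (x i) : ℝ)| ≤ 1 := by
    intro i
    have := abs_real_inner_le_norm y (x i)
    rwa [hy, hnorm, one_mul] at this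
  have hmem : ∀ i, ‖y - x i‖^2 ∈ Set.Icc (0:ℝ) 4 := by
    intro i
    rw [hyd i]
    have := abs_le.mp (habs i)
    constructor <;> linarith [this.1, this.2]
  calc ∑ i, f (‖y - x i‖^2)
      ≤ ∑ i, (f 0 + α * ‖y - x i‖^2 + β * (‖y - x i‖^2)^2) :=
        Finset.sum_le_sum (fun i _ => hub _ (hmem i))
    _ = ∑ i, ((f 0 + 2*α + 4*β) + (-(2*α) - 8*β) * (inner ℝ y (x i) : ℝ)
          + 4*β * ((inner ℝ y (x i) : ℝ))^2) := by
        apply Finset.sum_congr rfl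
        intro i _
        rw [hyd i]; ring
    _ = (d+1 : ℝ) * (f 0 + 2*α + 4*β) + (-(2*α) - 8*β) * (∑ i, (inner ℝ y (x i) : ℝ))
          + 4*β * (∑ i, ((inner ℝ y (x i) : ℝ))^2) := by
        rw [Finset.sum_add_distrib, Finset.sum_add_distrib, ← Finset.mul_sum, ← Finset.mul_sum,
          Finset.sum_const, Finset.card_univ, Fintype.card_fin, nsmul_eq_mul]
        push_cast
        ring
    _ = f 0 + (d:ℝ) * f (2 + 2/(d:ℝ)) := by
        rw [hsc, hsq, hqτ]
        field_simp
        ring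
end

section
/- Let d ≥ 2 and f : [0,4] → (-∞,∞] be finite, non-increasing, and convex on (0,4] with lim_{t→0⁺} f(t) = f(0). Let ω = {v_0,...,v_d} ⊂ S^{d-1} be a configuration such that the origin is not in the interior of the convex hull of ω. Then min_{x ∈ S^{d-1}} ∑_{i=0}^d f(|x - v_i|²) ≤ min{ f(4) + d·f(2 - 2/d), f(0) + d·f(2 + 2/d) }. If f is strictly convex on (0,4], the inequality is strict. -/
open Filter Topology Set

lemma sep_lemma {d : ℕ} (v : Fin (d+1) → EuclideanSpace ℝ (Fin d))
    (hns : (0 : EuclideanSpace ℝ (Fin d)) ∉ interior (convexHull ℝ (Set.range v))) :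
    ∃ y : EuclideanSpace ℝ (Fin d), ‖y‖ = 1 ∧ ∀ i, inner ℝ y (v i) ≤ (0:ℝ) := by
  have hCconv : Convex ℝ (convexHull ℝ (Set.range v)) := convex_convexHull ℝ _
  have key : ∃ a : EuclideanSpace ℝ (Fin d), a ≠ 0 ∧ ∀ i, inner ℝ a (v i) ≤ (0:ℝ) := by
    by_cases htop : affineSpan ℝ (Set.range v) = ⊤
    · have hint : (interior (convexHull ℝ (Set.range v))).Nonempty :=
        interior_convexHull_nonempty_iff_affineSpan_eq_top.mpr htop
      obtain ⟨g, hg⟩ := geometric_hahn_banach_open_point hCconv.interior isOpen_interior hns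
      obtain ⟨z, hz⟩ := hint
      have hgz : g z < g 0 := hg z hz
      have hgC : ∀ x ∈ convexHull ℝ (Set.range v), g x ≤ g 0 := by
        intro x hx
        have hseg : ∀ t : ℝ, t ∈ Set.Ioo (0:ℝ) 1 → g (t • z + (1 - t) • x) < g 0 := fun t ht =>
          hg _ (hCconv.combo_interior_self_mem_interior hz hx ht.1 (by linarith [ht.2]) (by ring))
        have htend : Tendsto (fun t : ℝ => g (t • z + (1 - t) • x)) (𝓝[>] 0) (𝓝 (g x)) := by
          have hc : ContinuousAt (fun t : ℝ => g (t • z + (1 - t) • x)) 0 := by fun_prop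
          have h0 : g ((0:ℝ) • z + (1 - 0) • x) = g x := by norm_num
          simpa [h0] using hc.continuousWithinAt.tendsto
        refine le_of_tendsto htend ?_
        filter_upwards [Ioo_mem_nhdsGT_of_mem (by norm_num : (0:ℝ) ∈ Set.Ico 0 1)] with t ht
        exact (hseg t ht).le
      refine ⟨(InnerProductSpace.toDual ℝ (EuclideanSpace ℝ (Fin d))).symm g, ?_, ?_⟩
      · intro h0
        have hg0 : g = 0 := by
          have := congrArg (InnerProductSpace.toDual ℝ (EuclideanSpace ℝ (Fin d))) h0
          simpa using this
        rw [hg0] at hgz; simp at hgz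
      · intro i
        rw [InnerProductSpace.toDual_symm_apply]
        simpa using hgC (v i) (subset_convexHull ℝ _ ⟨i, rfl⟩)
    · have hvne : (Set.range v).Nonempty := ⟨v 0, ⟨0, rfl⟩⟩
      have hdir : (affineSpan ℝ (Set.range v)).direction ≠ ⊤ := by
        intro h
        exact htop ((AffineSubspace.direction_eq_top_iff_of_nonempty
          ((affineSpan_nonempty (k := ℝ)).mpr hvne)).mp h)
      obtain ⟨a, haK, ha0⟩ := Submodule.exists_mem_ne_zero_of_ne_bot
        (fun h => hdir (Submodule.orthogonal_eq_bot_iff.mp h))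
      have hconst : ∀ i, inner ℝ a (v i) = (inner ℝ a (v 0) : ℝ) := by
        intro i
        have hmem : v i - v 0 ∈ (affineSpan ℝ (Set.range v)).direction := by
          exact AffineSubspace.vsub_mem_direction
            (subset_affineSpan ℝ _ (Set.mem_range_self i))
            (subset_affineSpan ℝ _ (Set.mem_range_self 0))
        have h0 := (Submodule.mem_orthogonal _ a).mp haK _ hmem
        have h' : inner ℝ a (v i) - inner ℝ a (v 0) = (0:ℝ) := by
          rw [← inner_sub_right, real_inner_comm]; exact h0
        linarith
      rcases le_or_gt (inner ℝ a (v 0) : ℝ) 0 with hc | hc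
      · exact ⟨a, ha0, fun i => (hconst i) ▸ hc⟩
      · refine ⟨-a, neg_ne_zero.mpr ha0, fun i => ?_⟩
        rw [inner_neg_left, hconst i]; linarith
  obtain ⟨a, ha0, hav⟩ := key
  refine ⟨‖a‖⁻¹ • a, ?_, ?_⟩
  · rw [norm_smul]; simp [norm_ne_zero_iff.mpr ha0]
  · intro i
    rw [real_inner_smul_left]
    exact mul_nonpos_of_nonneg_of_nonpos (by positivity) (hav i)

lemma conv_limit (g : ℝ → ℝ) (hconv : ConvexOn ℝ (Set.Ioc (0:ℝ) 4) g) (L : ℝ)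
    (hlim : Filter.Tendsto g (nhdsWithin 0 (Set.Ioi 0)) (nhds L)) {p w : ℝ}
    (hp : 0 < p) (hpw : p < w) (hw : w ≤ 4) :
    g p ≤ ((w - p)/w) * L + (p/w) * g w := by
  have hw0 : 0 < w := hp.trans hpw
  have hev : ∀ᶠ s in 𝓝[>] (0:ℝ), g p ≤ ((w - p)/(w - s)) * g s + ((p - s)/(w - s)) * g w := by
    filter_upwards [Ioo_mem_nhdsGT_of_mem (by constructor <;> linarith : (0:ℝ) ∈ Set.Ico 0 p)]
      with s hs
    have hws : 0 < w - s := by linarith [hs.2]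
    have ha : 0 ≤ (w - p)/(w - s) := div_nonneg (by linarith) hws.le
    have hb : 0 ≤ (p - s)/(w - s) := by
      apply div_nonneg _ hws.le; linarith [hs.2]
    have hab : (w - p)/(w - s) + (p - s)/(w - s) = 1 := by
      field_simp; ring
    have hcomb : (w - p)/(w - s) * s + (p - s)/(w - s) * w = p := by
      field_simp; ring
    have := hconv.2 (x := s) (y := w) ⟨hs.1, by linarith⟩ ⟨hw0, hw⟩ ha hb hab
    simpa [smul_eq_mul, hcomb] using this
  have htend : Tendsto (fun s => ((w - p)/(w - s)) * g s + ((p - s)/(w - s)) * g w)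
      (𝓝[>] (0:ℝ)) (𝓝 (((w - p)/w) * L + (p/w) * g w)) := by
    have hws : Tendsto (fun s : ℝ => w - s) (𝓝[>] (0:ℝ)) (𝓝 w) := by
      have : Tendsto (fun s : ℝ => w - s) (𝓝 (0:ℝ)) (𝓝 (w - 0)) :=
        (continuous_const.sub continuous_id).tendsto 0
      simpa using this.mono_left nhdsWithin_le_nhds
    have h1 : Tendsto (fun s : ℝ => (w - p)/(w - s)) (𝓝[>] (0:ℝ)) (𝓝 ((w - p)/w)) :=
      tendsto_const_nhds.div hws hw0.ne'
    have h2 : Tendsto (fun s : ℝ => (p - s)/(w - s)) (𝓝[>] (0:ℝ)) (𝓝 (p/w)) := by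
      have hps : Tendsto (fun s : ℝ => p - s) (𝓝[>] (0:ℝ)) (𝓝 p) := by
        have : Tendsto (fun s : ℝ => p - s) (𝓝 (0:ℝ)) (𝓝 (p - 0)) :=
          (continuous_const.sub continuous_id).tendsto 0
        simpa using this.mono_left nhdsWithin_le_nhds
      exact hps.div hws hw0.ne'
    exact (h1.mul hlim).add (h2.mul tendsto_const_nhds)
  exact ge_of_tendsto htend hev

theorem stmt_14 (d : ℕ) (hd : 2 ≤ d) (f : ℝ → EReal)
    (hne_bot : ∀ t ∈ Set.Icc (0:ℝ) 4, f t ≠ ⊥)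
    (hfin : ∀ t ∈ Set.Ioc (0:ℝ) 4, f t ≠ ⊤)
    (hanti : AntitoneOn f (Set.Ioc (0:ℝ) 4))
    (hconv : ConvexOn ℝ (Set.Ioc (0:ℝ) 4) (fun t => (f t).toReal))
    (hlim : Filter.Tendsto f (nhdsWithin 0 (Set.Ioi 0)) (nhds (f 0)))
    (v : Fin (d+1) → EuclideanSpace ℝ (Fin d))
    (hvnorm : ∀ i, ‖v i‖ = 1) (hvinj : Function.Injective v)
    (hns : (0 : EuclideanSpace ℝ (Fin d)) ∉ interior (convexHull ℝ (Set.range v))) :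
    (⨅ y : Metric.sphere (0 : EuclideanSpace ℝ (Fin d)) 1,
        ∑ i, f (‖(y : EuclideanSpace ℝ (Fin d)) - v i‖^2)) ≤
      min (f 4 + ((d:ℝ) : EReal) * f (2 - 2/(d:ℝ)))
          (f 0 + ((d:ℝ) : EReal) * f (2 + 2/(d:ℝ))) ∧
    (StrictConvexOn ℝ (Set.Ioc (0:ℝ) 4) (fun t => (f t).toReal) →
      (⨅ y : Metric.sphere (0 : EuclideanSpace ℝ (Fin d)) 1,
          ∑ i, f (‖(y : EuclideanSpace ℝ (Fin d)) - v i‖^2)) <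
        min (f 4 + ((d:ℝ) : EReal) * f (2 - 2/(d:ℝ)))
            (f 0 + ((d:ℝ) : EReal) * f (2 + 2/(d:ℝ)))) := by
  set n : ℝ := (d : ℝ) with hn
  have hn2 : (2:ℝ) ≤ n := by rw [hn]; exact_mod_cast hd
  have hn0 : (0:ℝ) < n := by linarith
  set g : ℝ → ℝ := fun t => (f t).toReal with hg
  -- memberships
  have m2 : (2:ℝ) ∈ Set.Ioc (0:ℝ) 4 := by norm_num
  have m4 : (4:ℝ) ∈ Set.Ioc (0:ℝ) 4 := by norm_num
  have m1 : (1:ℝ) ∈ Set.Ioc (0:ℝ) 4 := by norm_num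
  have hinvn : 0 < 2/n := by positivity
  have hinvn1 : 2/n ≤ 1 := by
    rw [div_le_one hn0]; linarith
  have mm : (2 - 2/n) ∈ Set.Ioc (0:ℝ) 4 := ⟨by linarith, by linarith⟩
  have mw : (2 + 2/n) ∈ Set.Ioc (0:ℝ) 4 := ⟨by linarith, by linarith⟩
  have hcoe : ∀ t ∈ Set.Ioc (0:ℝ) 4, f t = ((g t : ℝ) : EReal) := fun t ht =>
    (EReal.coe_toReal (hfin t ht) (hne_bot t ⟨ht.1.le, ht.2⟩)).symm
  -- geometry: good point y on the sphere
  obtain ⟨y, hy1, hyv⟩ := sep_lemma v hns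
  have hymem : y ∈ Metric.sphere (0 : EuclideanSpace ℝ (Fin d)) 1 :=
    mem_sphere_zero_iff_norm.mpr hy1
  have hti : ∀ i, ‖y - v i‖^2 = 2 - 2 * inner ℝ y (v i) := by
    intro i; rw [norm_sub_sq_real, hy1, hvnorm]; ring
  have htmem : ∀ i, ‖y - v i‖^2 ∈ Set.Ioc (0:ℝ) 4 := by
    intro i
    have habs := abs_real_inner_le_norm y (v i)
    rw [hy1, hvnorm i] at habs
    rw [one_mul] at habs
    have h1 : -1 ≤ (inner ℝ y (v i) : ℝ) := (abs_le.mp habs).1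
    rw [hti i]; constructor <;> [linarith [hyv i]; linarith]
  have hterm : ∀ i, f (‖y - v i‖^2) ≤ f 2 := by
    intro i
    apply hanti m2 (htmem i)
    rw [hti i]; linarith [hyv i]
  -- infimum ≤ (d+1) f 2
  have hM : (⨅ y : Metric.sphere (0 : EuclideanSpace ℝ (Fin d)) 1,
        ∑ i, f (‖(y : EuclideanSpace ℝ (Fin d)) - v i‖^2)) ≤
      (((n+1) * g 2 : ℝ) : EReal) := by
    refine le_trans (iInf_le _ ⟨y, hymem⟩) ?_
    have hsum : (∑ i, f (‖y - v i‖^2)) ≤ ∑ _i : Fin (d+1), f 2 :=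
      Finset.sum_le_sum (fun i _ => hterm i)
    refine hsum.trans ?_
    rw [hcoe 2 m2]
    have hcs : (∑ _i : Fin (d+1), ((g 2 : ℝ) : EReal)) =
        ((∑ _i : Fin (d+1), g 2 : ℝ) : EReal) :=
      (map_sum (⟨⟨Real.toEReal, EReal.coe_zero⟩, EReal.coe_add⟩ : ℝ →+ EReal) _ _).symm
    rw [hcs]
    apply EReal.coe_le_coe_iff.mpr
    rw [Finset.sum_const, Finset.card_univ, Fintype.card_fin, nsmul_eq_mul]
    push_cast
    exact le_refl _
  -- key real inequalities
  have hn1 : (0:ℝ) < n + 1 := by linarith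
  have hA : (n+1) * g 2 ≤ g 4 + n * g (2 - 2/n) := by
    have h := hconv.2 m4 mm (le_of_lt (by positivity : (0:ℝ) < 1/(n+1)))
      (le_of_lt (by positivity : (0:ℝ) < n/(n+1))) (by field_simp; try ring)
    simp only [smul_eq_mul] at h
    rw [show (1/(n+1)) * 4 + (n/(n+1)) * (2 - 2/n) = 2 by field_simp; try ring] at h
    have hmul := mul_le_mul_of_nonneg_left h hn1.le
    rw [show (n+1) * ((1/(n+1)) * g 4 + (n/(n+1)) * g (2 - 2/n))
        = g 4 + n * g (2 - 2/n) by field_simp; try ring] at hmul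
    exact hmul
  have hbot0 : f 0 ≠ ⊥ := hne_bot 0 ⟨le_refl 0, by norm_num⟩
  have hB : f 0 ≠ ⊤ → (n+1) * g 2 ≤ (f 0).toReal + n * g (2 + 2/n) := by
    intro h0
    have hlimg : Filter.Tendsto g (nhdsWithin 0 (Set.Ioi 0)) (nhds ((f 0).toReal)) :=
      (EReal.tendsto_toReal h0 hbot0).comp hlim
    have hcl := conv_limit g hconv _ hlimg (p := 2) (w := 2 + 2/n) two_pos
      (by linarith) (by linarith)
    rw [show (2 + 2/n - 2)/(2 + 2/n) = 1/(n+1) by field_simp; try ring,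
      show 2/(2 + 2/n) = n/(n+1) by field_simp; try ring] at hcl
    have hmul := mul_le_mul_of_nonneg_left hcl hn1.le
    rw [show (n+1) * ((1/(n+1)) * (f 0).toReal + (n/(n+1)) * g (2 + 2/n))
        = (f 0).toReal + n * g (2 + 2/n) by field_simp; try ring] at hmul
    exact hmul
  -- EReal non-strict bounds
  have hAle : (((n+1) * g 2 : ℝ) : EReal) ≤ f 4 + ((n : ℝ) : EReal) * f (2 - 2/n) := by
    rw [hcoe 4 m4, hcoe _ mm, ← EReal.coe_mul, ← EReal.coe_add]
    exact EReal.coe_le_coe_iff.mpr hA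
  have hBle : (((n+1) * g 2 : ℝ) : EReal) ≤ f 0 + ((n : ℝ) : EReal) * f (2 + 2/n) := by
    by_cases h0 : f 0 = ⊤
    · rw [h0, EReal.top_add_of_ne_bot]
      · exact le_top
      · rw [hcoe _ mw, ← EReal.coe_mul]; exact EReal.coe_ne_bot _
    · rw [hcoe _ mw, ← EReal.coe_mul,
        show f 0 = (((f 0).toReal : ℝ) : EReal) from (EReal.coe_toReal h0 hbot0).symm,
        ← EReal.coe_add]
      exact EReal.coe_le_coe_iff.mpr (hB h0)
  refine ⟨le_min (hM.trans hAle) (hM.trans hBle), fun hsc => ?_⟩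
  -- strict versions
  have hA' : (n+1) * g 2 < g 4 + n * g (2 - 2/n) := by
    have hne : (4:ℝ) ≠ 2 - 2/n := by
      intro h; have : 2/n = -2 := by linarith
      linarith [hinvn]
    have h := hsc.2 m4 mm hne (by positivity : (0:ℝ) < 1/(n+1))
      (by positivity : (0:ℝ) < n/(n+1)) (by field_simp; try ring)
    simp only [smul_eq_mul] at h
    rw [show (1/(n+1)) * 4 + (n/(n+1)) * (2 - 2/n) = 2 by field_simp; try ring] at h
    have hmul := mul_lt_mul_of_pos_left h hn1
    rw [show (n+1) * ((1/(n+1)) * g 4 + (n/(n+1)) * g (2 - 2/n))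
        = g 4 + n * g (2 - 2/n) by field_simp; try ring] at hmul
    exact hmul
  have hB' : f 0 ≠ ⊤ → (n+1) * g 2 < (f 0).toReal + n * g (2 + 2/n) := by
    intro h0
    have hlimg : Filter.Tendsto g (nhdsWithin 0 (Set.Ioi 0)) (nhds ((f 0).toReal)) :=
      (EReal.tendsto_toReal h0 hbot0).comp hlim
    have h2 := conv_limit g hconv _ hlimg (p := 1) (w := 2 + 2/n) one_pos
      (by linarith) (by linarith)
    rw [show (2 + 2/n - 1)/(2 + 2/n) = (n+2)/(2*n+2) by field_simp; try ring,
      show 1/(2 + 2/n) = n/(2*n+2) by field_simp; try ring] at h2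
    have h1 : g 2 < (2/(n+2)) * g 1 + (n/(n+2)) * g (2 + 2/n) := by
      have hne : (1:ℝ) ≠ 2 + 2/n := by intro h; linarith [hinvn]
      have h := hsc.2 m1 mw hne (by positivity : (0:ℝ) < 2/(n+2))
        (by positivity : (0:ℝ) < n/(n+2)) (by field_simp; try ring)
      simp only [smul_eq_mul] at h
      rw [show (2/(n+2)) * 1 + (n/(n+2)) * (2 + 2/n) = 2 by field_simp; try ring] at h
      exact h
    set L := (f 0).toReal with hL
    have hp2 : (0:ℝ) < n + 2 := by linarith
    have hp22 : (0:ℝ) < 2*n + 2 := by linarith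
    have k1 : (n+2) * g 2 < 2 * g 1 + n * g (2 + 2/n) := by
      have hm := mul_lt_mul_of_pos_left h1 hp2
      rw [show (n+2) * ((2/(n+2)) * g 1 + (n/(n+2)) * g (2 + 2/n))
          = 2 * g 1 + n * g (2 + 2/n) by field_simp; try ring] at hm
      exact hm
    have k2 : (2*n+2) * g 1 ≤ (n+2) * L + n * g (2 + 2/n) := by
      have hm := mul_le_mul_of_nonneg_left h2 hp22.le
      rw [show (2*n+2) * ((n+2)/(2*n+2) * L + (n/(2*n+2)) * g (2 + 2/n))
          = (n+2) * L + n * g (2 + 2/n) by field_simp; try ring] at hm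
      exact hm
    have hscaled : 2*(n+2) * ((n+1) * g 2) < 2*(n+2) * (L + n * g (2 + 2/n)) := by
      nlinarith [mul_lt_mul_of_pos_left k1 hp22, mul_le_mul_of_nonneg_left k2
        (by norm_num : (0:ℝ) ≤ 2)]
    exact lt_of_mul_lt_mul_left hscaled (by positivity)
  have hAlt : (((n+1) * g 2 : ℝ) : EReal) < f 4 + ((n : ℝ) : EReal) * f (2 - 2/n) := by
    rw [hcoe 4 m4, hcoe _ mm, ← EReal.coe_mul, ← EReal.coe_add]
    exact EReal.coe_lt_coe_iff.mpr hA'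
  have hBlt : (((n+1) * g 2 : ℝ) : EReal) < f 0 + ((n : ℝ) : EReal) * f (2 + 2/n) := by
    by_cases h0 : f 0 = ⊤
    · rw [h0, EReal.top_add_of_ne_bot]
      · exact EReal.coe_lt_top _
      · rw [hcoe _ mw, ← EReal.coe_mul]; exact EReal.coe_ne_bot _
    · rw [hcoe _ mw, ← EReal.coe_mul,
        show f 0 = (((f 0).toReal : ℝ) : EReal) from (EReal.coe_toReal h0 hbot0).symm,
        ← EReal.coe_add]
      exact EReal.coe_lt_coe_iff.mpr (hB' h0)
  exact lt_min (hM.trans_lt hAlt) (hM.trans_lt hBlt)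
end
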